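/- arXiv:1105.2401 — 13 statements merged into one kernel-verified Lean document; each statement's English description precedes it below -/
import Mathlib

section
/- Let (X,d,≤) be an ordered metric space such that d is complete and T : X → X is (d,≤)-contractive. Assume: (a03) there exists x ∈ X with x <> Tx; (a04) T is monotone (increasing or decreasing); (a05) for each x,y ∈ X the pair {x,y} has a lower bound and an upper bound in X; (a06) every <>-ascending sequence (x_n) that d-converges to x has a subsequence (x_{q(n)}) with x_{q(n)} <> x for all n. Then T is a Picard operator (modulo d): for every x ∈ X the orbit (T^n x) d-converges to a fixed point of T, and the fixed point set of T is a singleton. -/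
open Filter Topology

/-- Nieto–Rodriguez-Lopez theorem (comparison version). -/
theorem nieto_lopez_a06 {X : Type*} [MetricSpace X] [PartialOrder X] [CompleteSpace X]
    (T : X → X) (α : ℝ) (hα0 : 0 < α) (hα1 : α < 1)
    (hcontr : ∀ x y : X, x ≤ y → dist (T x) (T y) ≤ α * dist x y)
    (ha03 : ∃ x : X, x ≤ T x ∨ T x ≤ x)
    (ha04 : (∀ x y : X, x ≤ y → T x ≤ T y) ∨ (∀ x y : X, x ≤ y → T y ≤ T x))
    (ha05 : ∀ x y : X, (∃ u : X, u ≤ x ∧ u ≤ y) ∧ (∃ v : X, x ≤ v ∧ y ≤ v))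
    (ha06 : ∀ (x : ℕ → X) (l : X),
      (∀ n, x n ≤ x (n + 1) ∨ x (n + 1) ≤ x n) →
      Tendsto x atTop (𝓝 l) →
      ∃ q : ℕ → ℕ, StrictMono q ∧ ∀ n, x (q n) ≤ l ∨ l ≤ x (q n)) :
    (∀ x : X, ∃ z : X, Tendsto (fun n => T^[n] x) atTop (𝓝 z) ∧ T z = z) ∧
      (∃! z : X, T z = z) := by
  obtain ⟨x0, hx0⟩ := ha03
  have hCT : ∀ x y : X, (x ≤ y ∨ y ≤ x) → (T x ≤ T y ∨ T y ≤ T x) := by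
    intro x y h
    rcases ha04 with h4 | h4
    · rcases h with h | h
      · exact Or.inl (h4 _ _ h)
      · exact Or.inr (h4 _ _ h)
    · rcases h with h | h
      · exact Or.inr (h4 _ _ h)
      · exact Or.inl (h4 _ _ h)
  have hcontr' : ∀ x y : X, (x ≤ y ∨ y ≤ x) → dist (T x) (T y) ≤ α * dist x y := by
    intro x y h
    rcases h with h | h
    · exact hcontr x y h
    · rw [dist_comm, dist_comm x y]; exact hcontr y x h
  have hiterC : ∀ x y : X, (x ≤ y ∨ y ≤ x) →
      ∀ n, (T^[n] x ≤ T^[n] y ∨ T^[n] y ≤ T^[n] x) := by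
    intro x y h n
    induction n with
    | zero => simpa using h
    | succ n ih =>
      rw [Function.iterate_succ_apply', Function.iterate_succ_apply']
      exact hCT _ _ ih
  have hiterD : ∀ x y : X, (x ≤ y ∨ y ≤ x) →
      ∀ n, dist (T^[n] x) (T^[n] y) ≤ α ^ n * dist x y := by
    intro x y h n
    induction n with
    | zero => simp
    | succ n ih =>
      rw [Function.iterate_succ_apply', Function.iterate_succ_apply']
      calc dist (T (T^[n] x)) (T (T^[n] y)) ≤ α * dist (T^[n] x) (T^[n] y) :=
            hcontr' _ _ (hiterC x y h n)
        _ ≤ α * (α ^ n * dist x y) := by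
            exact mul_le_mul_of_nonneg_left ih hα0.le
        _ = α ^ (n + 1) * dist x y := by ring
  -- the orbit of x0 is Cauchy
  have hasc : ∀ n, T^[n] x0 ≤ T^[n+1] x0 ∨ T^[n+1] x0 ≤ T^[n] x0 := by
    intro n
    have := hiterC x0 (T x0) hx0 n
    rwa [← Function.iterate_succ_apply] at this
  have hcauchy : CauchySeq (fun n => T^[n] x0) := by
    apply cauchySeq_of_le_geometric α (dist x0 (T x0)) hα1
    intro n
    have := hiterD x0 (T x0) hx0 n
    rw [← Function.iterate_succ_apply] at this
    linarith [this]
  obtain ⟨z, hz⟩ := cauchySeq_tendsto_of_complete hcauchy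
  obtain ⟨q, hq, hcmp⟩ := ha06 (fun n => T^[n] x0) z hasc hz
  -- z is a fixed point
  have h1 : Tendsto (fun n => T^[q n] x0) atTop (𝓝 z) := hz.comp hq.tendsto_atTop
  have hd1 : Tendsto (fun n => dist (T^[q n] x0) z) atTop (𝓝 0) :=
    tendsto_iff_dist_tendsto_zero.mp h1
  have hd2 : Tendsto (fun n => dist (T (T^[q n] x0)) (T z)) atTop (𝓝 0) := by
    apply squeeze_zero (fun n => dist_nonneg) (fun n => hcontr' _ _ (hcmp n))
    simpa using hd1.const_mul α
  have h2 : Tendsto (fun n => T (T^[q n] x0)) atTop (𝓝 (T z)) :=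
    tendsto_iff_dist_tendsto_zero.mpr hd2
  have h3 : Tendsto (fun n => T (T^[q n] x0)) atTop (𝓝 z) := by
    have hq1 : Tendsto (fun n => q n + 1) atTop atTop :=
      tendsto_atTop_mono (fun n => Nat.le_succ (q n)) hq.tendsto_atTop
    have h3' : Tendsto (fun n => T^[q n + 1] x0) atTop (𝓝 z) := hz.comp hq1
    have he : (fun n => T (T^[q n] x0)) = fun n => T^[q n + 1] x0 := by
      funext n; rw [Function.iterate_succ_apply']
    rw [he]; exact h3'
  have hTz : T z = z := tendsto_nhds_unique h2 h3
  -- convergence of every orbit to z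
  have hconv : ∀ x : X, Tendsto (fun n => T^[n] x) atTop (𝓝 z) := by
    intro x
    obtain ⟨-, v, hxv, hzv⟩ := ha05 x z
    rw [tendsto_iff_dist_tendsto_zero]
    have hnn : ∀ n : ℕ, (0:ℝ) ≤ dist (T^[n] x) z := fun n => dist_nonneg
    refine squeeze_zero (g := fun n => α ^ n * dist x v + α ^ n * dist z v) hnn ?_ ?_
    · intro n
      have hfz : T^[n] z = z := Function.iterate_fixed hTz n
      have e1 : dist (T^[n] x) z ≤ dist (T^[n] x) (T^[n] v) + dist (T^[n] v) z :=
        dist_triangle (T^[n] x) (T^[n] v) z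
      have e2 := hiterD x v (Or.inl hxv) n
      have e3 := hiterD z v (Or.inl hzv) n
      rw [hfz, dist_comm z (T^[n] v)] at e3
      show dist (T^[n] x) z ≤ α ^ n * dist x v + α ^ n * dist z v
      linarith
    · have hp : Tendsto (fun n : ℕ => α ^ n) atTop (𝓝 0) :=
        tendsto_pow_atTop_nhds_zero_of_lt_one hα0.le hα1
      have := (hp.mul_const (dist x v)).add (hp.mul_const (dist z v))
      simpa using this
  refine ⟨fun x => ⟨z, hconv x, hTz⟩, z, hTz, ?_⟩
  intro y hy
  have : Tendsto (fun n => T^[n] y) atTop (𝓝 z) := hconv y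
  have hyc : Tendsto (fun _ : ℕ => y) atTop (𝓝 z) := by
    simpa [Function.iterate_fixed hy] using this
  exact tendsto_nhds_unique tendsto_const_nhds hyc
end

section
/- Let (X,d,≤) be an ordered metric space such that d is complete and T : X → X is (d,≤)-contractive. Assume: (a03) there exists x ∈ X with x <> Tx; (a04) T is monotone (increasing or decreasing); (a05) for each x,y ∈ X the pair {x,y} has a lower bound and an upper bound in X; and (a07) T is d-continuous, i.e. x_n → x (in d) implies Tx_n → Tx. Then T is a Picard operator (modulo d): for every x ∈ X the orbit (T^n x) d-converges to a fixed point of T, and the fixed point set of T is a singleton. -/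
open Filter Topology

/-- Ran–Reurings theorem: the continuity version of the
Nieto–Rodriguez-Lopez fixed point result. -/
theorem ran_reurings_a07 {X : Type*} [MetricSpace X] [PartialOrder X] [CompleteSpace X]
    (T : X → X) (α : ℝ) (hα0 : 0 < α) (hα1 : α < 1)
    (hcontr : ∀ x y : X, x ≤ y → dist (T x) (T y) ≤ α * dist x y)
    (ha03 : ∃ x : X, x ≤ T x ∨ T x ≤ x)
    (ha04 : (∀ x y : X, x ≤ y → T x ≤ T y) ∨ (∀ x y : X, x ≤ y → T y ≤ T x))
    (ha05 : ∀ x y : X, (∃ u : X, u ≤ x ∧ u ≤ y) ∧ (∃ v : X, x ≤ v ∧ y ≤ v))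
    (ha07 : ∀ (x : ℕ → X) (l : X), Tendsto x atTop (𝓝 l) →
      Tendsto (fun n => T (x n)) atTop (𝓝 (T l))) :
    (∀ x : X, ∃ z : X, Tendsto (fun n => T^[n] x) atTop (𝓝 z) ∧ T z = z) ∧
      (∃! z : X, T z = z) := by
  -- comparability relation
  set C : X → X → Prop := fun x y => x ≤ y ∨ y ≤ x with hC
  have hCstep : ∀ x y, C x y → C (T x) (T y) := by
    intro x y h
    rcases ha04 with hmono | hmono
    · rcases h with h | h
      · exact Or.inl (hmono _ _ h)
      · exact Or.inr (hmono _ _ h)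
    · rcases h with h | h
      · exact Or.inr (hmono _ _ h)
      · exact Or.inl (hmono _ _ h)
  have hCcontr : ∀ x y, C x y → dist (T x) (T y) ≤ α * dist x y := by
    intro x y h
    rcases h with h | h
    · exact hcontr _ _ h
    · rw [dist_comm, dist_comm x y]; exact hcontr _ _ h
  have hiter : ∀ x y, C x y → ∀ n, dist (T^[n] x) (T^[n] y) ≤ α ^ n * dist x y := by
    intro x y h n
    induction n with
    | zero => simp
    | succ n ih =>
      have hc : C (T^[n] x) (T^[n] y) := by
        clear ih
        induction n with
        | zero => simpa using h
        | succ n ih => rw [Function.iterate_succ_apply', Function.iterate_succ_apply']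
                       exact hCstep _ _ ih
      calc dist (T^[n+1] x) (T^[n+1] y)
          = dist (T (T^[n] x)) (T (T^[n] y)) := by
            rw [Function.iterate_succ_apply', Function.iterate_succ_apply']
        _ ≤ α * dist (T^[n] x) (T^[n] y) := hCcontr _ _ hc
        _ ≤ α * (α ^ n * dist x y) := by
            exact mul_le_mul_of_nonneg_left ih hα0.le
        _ = α ^ (n+1) * dist x y := by ring
  obtain ⟨x0, hx0⟩ := ha03
  have hCx0 : C x0 (T x0) := hx0
  -- the orbit of x0 is Cauchy
  have hcauchy : CauchySeq (fun n => T^[n] x0) := by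
    apply cauchySeq_of_le_geometric α (dist x0 (T x0)) hα1
    intro n
    have := hiter x0 (T x0) hCx0 n
    simpa [Function.iterate_succ_apply, mul_comm] using this
  obtain ⟨z, hz⟩ := cauchySeq_tendsto_of_complete hcauchy
  have hTz : T z = z := by
    have h1 : Tendsto (fun n => T (T^[n] x0)) atTop (𝓝 (T z)) := ha07 _ _ hz
    have h2 : Tendsto (fun n => T^[n+1] x0) atTop (𝓝 z) :=
      hz.comp (tendsto_add_atTop_nat 1)
    have h2' : Tendsto (fun n => T (T^[n] x0)) atTop (𝓝 z) := by
      simpa [Function.iterate_succ_apply'] using h2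
    exact tendsto_nhds_unique h1 h2'
  -- every orbit converges to z
  have horb : ∀ x : X, Tendsto (fun n => T^[n] x) atTop (𝓝 z) := by
    intro x
    obtain ⟨-, v, hxv, hx0v⟩ := ha05 x x0
    rw [tendsto_iff_dist_tendsto_zero]
    have hb : ∀ n, dist (T^[n] x) z ≤
        α ^ n * (dist x v + dist v x0) + dist (T^[n] x0) z := by
      intro n
      calc dist (T^[n] x) z ≤ dist (T^[n] x) (T^[n] x0) + dist (T^[n] x0) z :=
            dist_triangle _ _ _
        _ ≤ (dist (T^[n] x) (T^[n] v) + dist (T^[n] v) (T^[n] x0)) + dist (T^[n] x0) z := by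
            gcongr; exact dist_triangle _ _ _
        _ ≤ (α ^ n * dist x v + α ^ n * dist v x0) + dist (T^[n] x0) z := by
            gcongr
            · exact hiter x v (Or.inl hxv) n
            · exact hiter v x0 (Or.inr hx0v) n
        _ = α ^ n * (dist x v + dist v x0) + dist (T^[n] x0) z := by ring
    have hlim : Tendsto (fun n => α ^ n * (dist x v + dist v x0) + dist (T^[n] x0) z)
        atTop (𝓝 0) := by
      have h1 : Tendsto (fun n : ℕ => α ^ n * (dist x v + dist v x0)) atTop (𝓝 0) := by
        simpa using (tendsto_pow_atTop_nhds_zero_of_lt_one hα0.le hα1).mul_const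
          (dist x v + dist v x0)
      have h2 : Tendsto (fun n => dist (T^[n] x0) z) atTop (𝓝 0) :=
        tendsto_iff_dist_tendsto_zero.mp hz
      simpa using h1.add h2
    exact squeeze_zero (fun n => dist_nonneg) hb hlim
  refine ⟨fun x => ⟨z, horb x, hTz⟩, z, hTz, ?_⟩
  intro w hw
  have : Tendsto (fun n => T^[n] w) atTop (𝓝 z) := horb w
  have hfix : ∀ n, T^[n] w = w := by
    intro n; induction n with
    | zero => rfl
    | succ n ih => rw [Function.iterate_succ_apply', ih, hw]
  have : Tendsto (fun _ : ℕ => w) atTop (𝓝 z) := by simpa [hfix] using this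
  exact tendsto_nhds_unique tendsto_const_nhds this
end

section
/- Let (X,d,≤) be an ordered metric space satisfying (b03): for every x,y ∈ X there exists a <>-chain between x and y. Define e(x,y) = inf{ d(z_1,z_2)+…+d(z_{k−1},z_k) : z_1,…,z_k is a <>-chain between x and y }. Then: (i) e is a metric on X (e(x,x)=0, e is symmetric, e satisfies the triangle inequality, and e(x,y)=0 implies x=y); (ii) d(x,y) ≤ e(x,y) for all x,y ∈ X; (iii) e(x,y) = d(x,y) whenever x <> y. -/
/-- A `<>`-chain between `x` and `y`: a finite list `z₁,…,z_k` (`k ≥ 2`) with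
`z₁ = x`, `z_k = y`, and consecutive terms comparable. -/
def IsChainBetween {X : Type*} [PartialOrder X] (l : List X) (x y : X) : Prop :=
  2 ≤ l.length ∧ l.head? = some x ∧ l.getLast? = some y ∧
    l.Chain' (fun a b : X => a ≤ b ∨ b ≤ a)

/-- The sum `d(z₁,z₂) + … + d(z_{k-1},z_k)` of consecutive distances along a list. -/
def chainLength {X : Type*} [MetricSpace X] (l : List X) : ℝ :=
  ((l.zip l.tail).map fun p => dist p.1 p.2).sum

/-- The chain metric `e(x,y)` — the infimum of lengths of `<>`-chains joining `x` to `y`. -/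
noncomputable def chainDist {X : Type*} [MetricSpace X] [PartialOrder X] (x y : X) : ℝ :=
  sInf {s : ℝ | ∃ l : List X, IsChainBetween l x y ∧ s = chainLength l}

section Aux
variable {X : Type*} [MetricSpace X]

lemma chainLength_nil : chainLength ([] : List X) = 0 := rfl

lemma chainLength_single (a : X) : chainLength [a] = 0 := by simp [chainLength]

lemma chainLength_cons_cons (a b : X) (t : List X) :
    chainLength (a :: b :: t) = dist a b + chainLength (b :: t) := by
  simp [chainLength]

lemma chainLength_nonneg (l : List X) : 0 ≤ chainLength l := by
  apply List.sum_nonneg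
  intro x hx
  simp only [List.mem_map] at hx
  obtain ⟨p, -, rfl⟩ := hx
  exact dist_nonneg

lemma dist_head_getLast_le :
    ∀ (l : List X) (a b : X), l.head? = some a → l.getLast? = some b →
      dist a b ≤ chainLength l
  | [], a, b => by simp
  | [c], a, b => by
      intro ha hb
      simp at ha hb
      subst ha; subst hb
      simp [chainLength_single]
  | c :: d :: t, a, b => by
      intro ha hb
      simp at ha
      subst ha
      have hb' : (d :: t).getLast? = some b := by
        rwa [List.getLast?_cons_cons] at hb
      have ih := dist_head_getLast_le (d :: t) d b rfl hb'
      rw [chainLength_cons_cons]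
      have htr := dist_triangle c d b
      linarith

lemma chainLength_append :
    ∀ (l : List X) (b a : X) (m : List X), l.getLast? = some b →
      chainLength (l ++ a :: m) = chainLength l + dist b a + chainLength (a :: m)
  | [], b, a, m => by simp
  | [c], b, a, m => by
      intro hb
      simp at hb
      subst hb
      have h1 : ([c] : List X) ++ a :: m = c :: a :: m := rfl
      rw [h1, chainLength_cons_cons, chainLength_single]
      ring
  | c :: d :: t, b, a, m => by
      intro hb
      rw [List.getLast?_cons_cons] at hb
      have ih := chainLength_append (d :: t) b a m hb
      have h1 : (c :: d :: t) ++ a :: m = c :: ((d :: t) ++ a :: m) := rfl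
      have h2 : (d :: t) ++ a :: m = d :: (t ++ a :: m) := rfl
      rw [h1, h2, chainLength_cons_cons, ← h2, ih, chainLength_cons_cons]
      ring

lemma chainLength_reverse : ∀ (l : List X), chainLength l.reverse = chainLength l
  | [] => rfl
  | [a] => by simp
  | a :: b :: t => by
      have ih := chainLength_reverse (b :: t)
      have h1 : (a :: b :: t).reverse = (b :: t).reverse ++ a :: [] := by simp
      have hlast : ((b :: t).reverse).getLast? = some b := by simp
      rw [h1, chainLength_append ((b :: t).reverse) b a [] hlast, chainLength_single,
        chainLength_cons_cons, ih, dist_comm]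
      ring

end Aux

/-- Under (b03), the chain function `e = chainDist` is a metric on `X`,
it majorizes `d`, and it agrees with `d` on comparable pairs. -/
theorem chainDist_is_metric {X : Type*} [MetricSpace X] [PartialOrder X]
    (hb03 : ∀ x y : X, ∃ l : List X, IsChainBetween l x y) :
    (∀ x : X, chainDist x x = 0) ∧
    (∀ x y : X, chainDist x y = chainDist y x) ∧
    (∀ x y z : X, chainDist x z ≤ chainDist x y + chainDist y z) ∧
    (∀ x y : X, chainDist x y = 0 → x = y) ∧
    (∀ x y : X, dist x y ≤ chainDist x y) ∧
    (∀ x y : X, (x ≤ y ∨ y ≤ x) → chainDist x y = dist x y) := by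
  set S : X → X → Set ℝ := fun x y =>
    {s : ℝ | ∃ l : List X, IsChainBetween l x y ∧ s = chainLength l} with hS
  have hSdef : ∀ x y : X, chainDist x y = sInf (S x y) := fun _ _ => rfl
  have hlb : ∀ x y : X, ∀ s ∈ S x y, dist x y ≤ s := by
    rintro x y s ⟨l, ⟨hlen, hhead, hlast, -⟩, rfl⟩
    exact dist_head_getLast_le l x y hhead hlast
  have hbdd : ∀ x y : X, BddBelow (S x y) := fun x y => ⟨dist x y, hlb x y⟩
  have hne : ∀ x y : X, (S x y).Nonempty := by
    intro x y
    obtain ⟨l, hl⟩ := hb03 x y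
    exact ⟨chainLength l, l, hl, rfl⟩
  -- reversal
  have hrev : ∀ x y : X, ∀ s ∈ S x y, s ∈ S y x := by
    rintro x y s ⟨l, ⟨hlen, hhead, hlast, hchain⟩, rfl⟩
    refine ⟨l.reverse, ⟨by simpa using hlen, by simpa using hlast,
      by simpa using hhead, ?_⟩, (chainLength_reverse l).symm⟩
    rw [List.Chain', List.isChain_reverse]
    exact hchain.imp (fun a b h => h.symm)
  have hSsymm : ∀ x y : X, S x y = S y x := fun x y =>
    Set.Subset.antisymm (hrev x y) (hrev y x)
  -- dist ≤ chainDist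
  have hge : ∀ x y : X, dist x y ≤ chainDist x y := fun x y =>
    le_csInf (hne x y) (hlb x y)
  -- chainDist x x = 0
  have hzero : ∀ x : X, chainDist x x = 0 := by
    intro x
    refine le_antisymm ?_ ?_
    · have hmem : (0 : ℝ) ∈ S x x := by
        refine ⟨[x, x], ⟨by simp, rfl, rfl, ?_⟩, by
          rw [chainLength_cons_cons, chainLength_single]; simp⟩
        exact List.isChain_pair.mpr (Or.inl le_rfl)
      exact csInf_le (hbdd x x) hmem
    · simpa using hge x x
  -- concatenation
  have hcat : ∀ x y z : X, ∀ a ∈ S x y, ∀ b ∈ S y z, a + b ∈ S x z := by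
    rintro x y z a ⟨l, ⟨hl2, hlh, hll, hlc⟩, rfl⟩ b ⟨m, ⟨hm2, hmh, hml, hmc⟩, rfl⟩
    obtain ⟨t, rfl⟩ : ∃ t, m = y :: t := by
      cases m with
      | nil => simp at hmh
      | cons m₀ t =>
          simp at hmh
          exact ⟨t, by rw [hmh]⟩
    obtain ⟨c, t', rfl⟩ : ∃ c t', t = c :: t' := by
      cases t with
      | nil => simp at hm2
      | cons c t' => exact ⟨c, t', rfl⟩
    have hlne : l ≠ [] := by rintro rfl; simp at hl2
    refine ⟨l ++ c :: t', ⟨?_, ?_, ?_, ?_⟩, ?_⟩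
    · rw [List.length_append]; omega
    · rw [List.head?_append_of_ne_nil l hlne]; exact hlh
    · rw [List.getLast?_append_cons]
      rwa [List.getLast?_cons_cons] at hml
    · rw [List.Chain', List.isChain_append]
      refine ⟨hlc, (List.isChain_cons_cons.mp hmc).2, ?_⟩
      intro p hp q hq
      rw [hll, Option.mem_some_iff] at hp
      simp at hq
      subst hp; subst hq
      exact (List.isChain_cons_cons.mp hmc).1
    · rw [chainLength_append l y c t' hll, chainLength_cons_cons]
      ring
  -- triangle
  have htri : ∀ x y z : X, chainDist x z ≤ chainDist x y + chainDist y z := by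
    intro x y z
    rw [hSdef, hSdef, hSdef, ← sub_le_iff_le_add']
    refine le_csInf (hne y z) ?_
    intro b hb
    rw [sub_le_iff_le_add, add_comm, ← sub_le_iff_le_add]
    refine le_csInf (hne x y) ?_
    intro a ha
    have := csInf_le (hbdd x z) (hcat x y z a ha b hb)
    linarith
  refine ⟨hzero, fun x y => by rw [hSdef, hSdef, hSsymm], htri, ?_, hge, ?_⟩
  · intro x y h
    have h2 := hge x y
    rw [h] at h2
    exact dist_le_zero.mp h2
  · intro x y hxy
    refine le_antisymm ?_ (hge x y)
    refine csInf_le (hbdd x y) ⟨[x, y], ⟨by simp, rfl, rfl, List.isChain_pair.mpr hxy⟩, ?_⟩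
    rw [chainLength_cons_cons, chainLength_single]; ring
end

section
/- Let (X,d) be a metric space with a quasi-order (reflexive transitive relation) ≤, and T : X → X an increasing selfmap (x ≤ y implies Tx ≤ Ty). Assume T is weakly conditional (G,<>)-contractive: there exists α ∈ (0,1) such that for all x,y with x <> y, if (1/(1+α))·max{d(x,Tx), d(y,Tx)} ≤ d(x,y) then d(Tx,Ty) ≤ α·d(x,y). Assume d is ao-complete and ≤ is ao-self-closed. Then T is a Picard operator modulo ≤: (i) for each x with x ≤ Tx, the orbit (T^n x) d-converges to some z ∈ Fix(T) with T^n x ≤ z for all n; and (ii) Fix(T) is ≤-singleton, i.e. z,w ∈ Fix(T) and z ≤ w imply z = w. -/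
open Filter Topology

/-- Key combinatorial lemma: if `a` decays geometrically step-to-step,
`a n ≤ b n + b (n+1)`, `b → 0`, then the "Suzuki premise"
`max (a n) (b (n+1)) ≤ (1+α) * b n` cannot fail for all `n ≥ N`. -/
private lemma suzuki_aux (α : ℝ) (hα0 : 0 < α) (hα1 : α < 1) (a b : ℕ → ℝ)
    (hb0 : ∀ n, 0 ≤ b n)
    (hstep : ∀ n, a (n+1) ≤ α * a n)
    (htri : ∀ n, a n ≤ b n + b (n+1))
    (hb : Tendsto b atTop (𝓝 0))
    (N : ℕ) (hfail : ∀ n, N ≤ n → (1+α) * b n < max (a n) (b (n+1))) : False := by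
  classical
  have h1α : (0:ℝ) < 1 + α := by linarith
  have key : ∀ M, N ≤ M → (∀ k, M ≤ k → ¬ ((1+α) * b k < a k)) → False := by
    intro M hM hnoa
    have hbf : ∀ k, M ≤ k → (1+α) * b k < b (k+1) := by
      intro k hk
      rcases lt_max_iff.mp (hfail k (hM.trans hk)) with h | h
      · exact absurd h (hnoa k hk)
      · exact h
    have hpos : 0 < b (M+1) :=
      lt_of_le_of_lt (mul_nonneg h1α.le (hb0 M)) (hbf M le_rfl)
    have hmono : ∀ j, b (M+1) ≤ b (M+1+j) := by
      intro j
      induction j with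
      | zero => exact le_rfl
      | succ j ih =>
        have h1 := hbf (M+1+j) (by omega)
        have h2 : b (M+1+j) ≤ b (M+1+j+1) := by nlinarith [hb0 (M+1+j)]
        exact ih.trans h2
    have hev : ∀ᶠ k in atTop, b k < b (M+1) := hb.eventually_lt_const hpos
    obtain ⟨k, hk1, hk2⟩ := (hev.and (eventually_ge_atTop (M+1))).exists
    have := hmono (k - (M+1))
    rw [show M+1+(k-(M+1)) = k from by omega] at this
    linarith
  have hexA : ∃ k, N ≤ k ∧ (1+α) * b k < a k := by
    by_contra h
    push_neg at h
    exact key N le_rfl fun k hk => not_lt.mpr (h k hk)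
  obtain ⟨n, hNn, hA⟩ := hexA
  have hex' : ∃ k, n < k ∧ (1+α) * b k < a k := by
    by_contra h
    push_neg at h
    exact key (n+1) (by omega) fun k hk => not_lt.mpr (h k (by omega))
  set n' := Nat.find hex' with hn'def
  obtain ⟨hnn', hA'⟩ := Nat.find_spec hex'
  have hmin : ∀ k, n < k → k < n' → (1+α) * b k < b (k+1) := by
    intro k h1 h2
    have h3 : ¬(n < k ∧ (1+α) * b k < a k) := Nat.find_min hex' h2
    rcases lt_max_iff.mp (hfail k (by omega)) with h | h
    · exact absurd ⟨h1, h⟩ h3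
    · exact h
  have hbchain : ∀ j, n+1+j ≤ n' → (1+α)^j * b (n+1) ≤ b (n+1+j) := by
    intro j
    induction j with
    | zero => intro _; simp
    | succ j ih =>
      intro hj
      have h2 := ih (by omega)
      have h3 := hmin (n+1+j) (by omega) (by omega)
      have h4 : (1+α) * ((1+α)^j * b (n+1)) ≤ (1+α) * b (n+1+j) :=
        mul_le_mul_of_nonneg_left h2 h1α.le
      calc (1+α)^(j+1) * b (n+1) = (1+α) * ((1+α)^j * b (n+1)) := by ring
        _ ≤ (1+α) * b (n+1+j) := h4
        _ ≤ b (n+1+(j+1)) := by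
            rw [show n+1+(j+1) = (n+1+j)+1 from rfl]
            nlinarith [hb0 (n+1+j)]
  have hachain : ∀ j, a (n+j) ≤ α^j * a n := by
    intro j
    induction j with
    | zero => simp
    | succ j ih =>
      calc a (n+(j+1)) = a ((n+j)+1) := by rw [show n+(j+1) = (n+j)+1 from rfl]
        _ ≤ α * a (n+j) := hstep _
        _ ≤ α * (α^j * a n) := mul_le_mul_of_nonneg_left ih hα0.le
        _ = α^(j+1) * a n := by ring
  have han : 0 < a n := lt_of_le_of_lt (mul_nonneg h1α.le (hb0 n)) hA
  have hbn1 : α/(1+α) * a n < b (n+1) := by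
    have h1 := htri n
    have h2 : b n < a n / (1+α) := by
      rw [lt_div_iff₀ h1α, mul_comm]; exact hA
    have h3 : a n - a n/(1+α) = α/(1+α) * a n := by
      field_simp
      ring
    linarith
  obtain ⟨k, hk⟩ : ∃ k, n' = n + (k + 1) := ⟨n' - n - 1, by omega⟩
  have hb' : (1+α)^k * b (n+1) ≤ b n' := by
    have := hbchain k (by omega)
    rwa [show n+1+k = n' from by omega] at this
  have ha' : a n' ≤ α^(k+1) * a n := by
    have := hachain (k+1)
    rwa [show n+(k+1) = n' from by omega] at this
  have hbig : (1+α)^(k+1) * b (n+1) < α^(k+1) * a n := by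
    calc (1+α)^(k+1) * b (n+1) = (1+α) * ((1+α)^k * b (n+1)) := by ring
      _ ≤ (1+α) * b n' := mul_le_mul_of_nonneg_left hb' h1α.le
      _ < a n' := hA'
      _ ≤ α^(k+1) * a n := ha'
  have hsmall : (1+α)^(k+1) * (α/(1+α) * a n) ≤ (1+α)^(k+1) * b (n+1) :=
    mul_le_mul_of_nonneg_left hbn1.le (pow_nonneg h1α.le (k+1))
  have hne : (1+α) ≠ 0 := ne_of_gt h1α
  have heq : (1+α)^(k+1) * (α/(1+α) * a n) = α * ((1+α)^k * a n) := by
    field_simp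
    ring
  have heq2 : α^(k+1) * a n = α * (α^k * a n) := by ring
  have hfin : (1+α)^k * a n < α^k * a n := by
    have h := hsmall.trans_lt hbig
    rw [heq, heq2] at h
    exact lt_of_mul_lt_mul_left h hα0.le
  have h5 : α^k ≤ 1 := pow_le_one₀ hα0.le hα1.le
  have h6 : (1:ℝ) ≤ (1+α)^k := one_le_pow₀ (by linarith)
  nlinarith [mul_le_mul_of_nonneg_right h5 han.le, mul_le_mul_of_nonneg_right h6 han.le]

/-- Theorem 5: a weakly conditional `(G,<>)`-contractive increasing selfmap of
an ao-complete quasi-ordered metric space with ao-self-closed quasi-order is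
a Picard operator modulo the quasi-order. -/
theorem suzuki_type_ordered {X : Type*} [MetricSpace X]
    (le : X → X → Prop) (hrefl : ∀ x : X, le x x)
    (htrans : ∀ x y z : X, le x y → le y z → le x z)
    (T : X → X) (hincr : ∀ x y : X, le x y → le (T x) (T y))
    (α : ℝ) (hα0 : 0 < α) (hα1 : α < 1)
    (hcontr : ∀ x y : X, (le x y ∨ le y x) →
      (1 / (1 + α)) * max (dist x (T x)) (dist y (T x)) ≤ dist x y →
      dist (T x) (T y) ≤ α * dist x y)
    (haocomplete : ∀ z : ℕ → X, (∀ i j : ℕ, i ≤ j → le (z i) (z j)) →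
      (∃ x : X, ∀ n, z n = T^[n] x) → CauchySeq z →
      ∃ l : X, Tendsto z atTop (𝓝 l))
    (haoselfclosed : ∀ (z : ℕ → X) (l : X), (∀ i j : ℕ, i ≤ j → le (z i) (z j)) →
      (∃ x : X, ∀ n, z n = T^[n] x) → Tendsto z atTop (𝓝 l) →
      ∀ n, le (z n) l) :
    (∀ x : X, le x (T x) →
      ∃ z : X, Tendsto (fun n => T^[n] x) atTop (𝓝 z) ∧ T z = z ∧
        ∀ n, le (T^[n] x) z) ∧
    (∀ z w : X, T z = z → T w = w → le z w → z = w) := by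
  have h1α : (0:ℝ) < 1 + α := by linarith
  have hG1 : 1/(1+α) ≤ 1 := by rw [div_le_one h1α]; linarith
  constructor
  · intro x hx
    set z : ℕ → X := fun n => T^[n] x with hzdef
    have hsucc : ∀ n, z (n+1) = T (z n) := fun n => Function.iterate_succ_apply' T n x
    have hstep1 : ∀ n, le (z n) (z (n+1)) := by
      intro n
      induction n with
      | zero => simpa [hzdef] using hx
      | succ n ih =>
        rw [hsucc n, hsucc (n+1)]
        exact hincr _ _ ih
    have hmono : ∀ i j : ℕ, i ≤ j → le (z i) (z j) := by
      intro i j hij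
      induction j, hij using Nat.le_induction with
      | base => exact hrefl _
      | succ j hij ih => exact htrans _ _ _ ih (hstep1 j)
    have horb : ∃ y, ∀ n, z n = T^[n] y := ⟨x, fun n => rfl⟩
    have hcons : ∀ n, dist (z (n+1)) (z (n+2)) ≤ α * dist (z n) (z (n+1)) := by
      intro n
      have hpre : (1/(1+α)) * max (dist (z n) (T (z n))) (dist (z (n+1)) (T (z n)))
          ≤ dist (z n) (z (n+1)) := by
        rw [← hsucc n, dist_self, max_eq_left dist_nonneg]
        nlinarith [dist_nonneg (x := z n) (y := z (n+1))]
      have h := hcontr (z n) (z (n+1)) (Or.inl (hstep1 n)) hpre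
      rwa [← hsucc n, ← hsucc (n+1)] at h
    have hgeo : ∀ n, dist (z n) (z (n+1)) ≤ dist (z 0) (z 1) * α ^ n := by
      intro n
      induction n with
      | zero => simp
      | succ n ih =>
        calc dist (z (n+1)) (z (n+2)) ≤ α * dist (z n) (z (n+1)) := hcons n
          _ ≤ α * (dist (z 0) (z 1) * α ^ n) := mul_le_mul_of_nonneg_left ih hα0.le
          _ = dist (z 0) (z 1) * α ^ (n+1) := by ring
    have hcauchy : CauchySeq z := cauchySeq_of_le_geometric α (dist (z 0) (z 1)) hα1 hgeo
    obtain ⟨l, hl⟩ := haocomplete z hmono horb hcauchy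
    have hlel : ∀ n, le (z n) l := haoselfclosed z l hmono horb hl
    have hfix : T l = l := by
      by_contra hne
      have hεpos : 0 < dist l (T l) := dist_pos.mpr (fun h => hne h.symm)
      set a : ℕ → ℝ := fun n => dist (z n) (z (n+1)) with hadef
      set b : ℕ → ℝ := fun n => dist (z n) l with hbdef
      have hbtend : Tendsto b atTop (𝓝 0) := by
        have := hl.dist (tendsto_const_nhds (x := l) (f := atTop))
        simpa using this
      have htri : ∀ n, a n ≤ b n + b (n+1) := by
        intro n
        calc a n ≤ dist (z n) l + dist l (z (n+1)) := dist_triangle _ _ _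
          _ = b n + b (n+1) := by rw [dist_comm l (z (n+1))]
      have hinf : ∀ N, ∃ n, N ≤ n ∧ max (a n) (b (n+1)) ≤ (1+α) * b n := by
        intro N
        by_contra h
        push_neg at h
        exact suzuki_aux α hα0 hα1 a b (fun n => dist_nonneg) hcons htri hbtend N h
      have hev : ∀ᶠ n in atTop, b n < dist l (T l) / 3 :=
        hbtend.eventually_lt_const (by positivity)
      obtain ⟨N, hN⟩ := eventually_atTop.mp hev
      obtain ⟨n, hn, hprem⟩ := hinf N
      have hpre2 : (1/(1+α)) * max (dist (z n) (T (z n))) (dist l (T (z n)))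
          ≤ dist (z n) l := by
        rw [← hsucc n, dist_comm l (z (n+1))]
        calc (1/(1+α)) * max (dist (z n) (z (n+1))) (dist (z (n+1)) l)
            ≤ (1/(1+α)) * ((1+α) * b n) := by
              apply mul_le_mul_of_nonneg_left hprem (by positivity)
          _ = b n := by field_simp
      have hcon := hcontr (z n) l (Or.inl (hlel n)) hpre2
      rw [← hsucc n] at hcon
      have h1 : dist l (T l) ≤ dist (z (n+1)) l + dist (z (n+1)) (T l) := by
        rw [dist_comm (z (n+1)) l]
        exact dist_triangle _ _ _
      have h2 : b (n+1) < dist l (T l)/3 := hN (n+1) (by omega)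
      have h3 : b n < dist l (T l)/3 := hN n hn
      have hbn0 : (0:ℝ) ≤ b n := dist_nonneg
      nlinarith
    exact ⟨l, hl, hfix, hlel⟩
  · intro p w hp hw hpw
    have hpre : (1/(1+α)) * max (dist p (T p)) (dist w (T p)) ≤ dist p w := by
      rw [hp, dist_self, dist_comm w p, max_eq_right dist_nonneg]
      nlinarith [dist_nonneg (x := p) (y := w)]
    have h := hcontr p w (Or.inl hpw) hpre
    rw [hp, hw] at h
    have h0 : dist p w ≤ 0 := by nlinarith [dist_nonneg (x := p) (y := w)]
    exact eq_of_dist_eq_zero (le_antisymm h0 dist_nonneg)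
end

section
/- Let (X,d) be a metric space with a quasi-order ≤, and T : X → X increasing (x ≤ y implies Tx ≤ Ty) and weakly conditional (G,<>)-contractive with constant α ∈ (0,1): for all x,y with x <> y, if (1/(1+α))·max{d(x,Tx), d(y,Tx)} ≤ d(x,y) then d(Tx,Ty) ≤ α·d(x,y). Then for every x ∈ X with x ≤ Tx, the orbit x_n = T^n x satisfies d(x_{n+1}, x_{n+2}) ≤ α·d(x_n, x_{n+1}) for all n; in particular (x_n) is a d-Cauchy sequence. -/
/-- For an increasing, weakly conditional `(G,<>)`-contractive map, the orbit
of any point `x` with `x ≤ Tx` contracts step by step; in particular it is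
a Cauchy sequence. -/
theorem orbit_contracts_and_cauchy {X : Type*} [MetricSpace X]
    (le : X → X → Prop) (hrefl : ∀ x : X, le x x)
    (htrans : ∀ x y z : X, le x y → le y z → le x z)
    (T : X → X) (hincr : ∀ x y : X, le x y → le (T x) (T y))
    (α : ℝ) (hα0 : 0 < α) (hα1 : α < 1)
    (hcontr : ∀ x y : X, (le x y ∨ le y x) →
      (1 / (1 + α)) * max (dist x (T x)) (dist y (T x)) ≤ dist x y →
      dist (T x) (T y) ≤ α * dist x y) :
    ∀ x : X, le x (T x) →
      (∀ n : ℕ, dist (T^[n + 1] x) (T^[n + 2] x) ≤ α * dist (T^[n] x) (T^[n + 1] x)) ∧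
      CauchySeq (fun n => T^[n] x) := by
  intro x hx
  have hle : ∀ n : ℕ, le (T^[n] x) (T^[n + 1] x) := by
    intro n
    induction n with
    | zero => simpa using hx
    | succ k ih =>
      rw [Function.iterate_succ_apply', Function.iterate_succ_apply']
      exact hincr _ _ ih
  have key : ∀ n : ℕ, dist (T^[n + 1] x) (T^[n + 2] x) ≤ α * dist (T^[n] x) (T^[n + 1] x) := by
    intro n
    have h1 : T^[n + 1] x = T (T^[n] x) := Function.iterate_succ_apply' T n x
    have h2 : T^[n + 2] x = T (T^[n + 1] x) := Function.iterate_succ_apply' T (n + 1) x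
    rw [h2]; nth_rewrite 1 [h1]
    apply hcontr _ _ (Or.inl (hle n))
    rw [← h1, dist_self, max_eq_left dist_nonneg]
    have h1α : (1 : ℝ) / (1 + α) ≤ 1 := by
      rw [div_le_one (by linarith)]
      linarith
    nlinarith [dist_nonneg (x := T^[n] x) (y := T^[n + 1] x)]
  refine ⟨key, ?_⟩
  have hgeo : ∀ n : ℕ, dist (T^[n] x) (T^[n + 1] x) ≤ dist x (T x) * α ^ n := by
    intro n
    induction n with
    | zero => simp
    | succ k ih =>
      calc dist (T^[k + 1] x) (T^[k + 2] x) ≤ α * dist (T^[k] x) (T^[k + 1] x) := key k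
        _ ≤ α * (dist x (T x) * α ^ k) := by
            exact mul_le_mul_of_nonneg_left ih hα0.le
        _ = dist x (T x) * α ^ (k + 1) := by ring
  exact cauchySeq_of_le_geometric α (dist x (T x)) hα1 hgeo
end

section
/- Let (X,d) be a metric space with a quasi-order ≤, and T : X → X increasing and weakly conditional (G,<>)-contractive: there exists α ∈ (0,1) such that for all x,y with x <> y, if (1/(1+α))·max{d(x,Tx), d(y,Tx)} ≤ d(x,y) then d(Tx,Ty) ≤ α·d(x,y). Assume d is ao-complete and ≤ is ao-self-closed. Then every fixed point x* of T is ≤-maximal in X(T,≤) = {x : x ≤ Tx}: for every u ∈ X with u ≤ Tu and x* ≤ u, one has u ≤ x*. -/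
open Filter Topology

/-- Every fixed point of a weakly conditional `(G,<>)`-contractive increasing
map (under ao-completeness and ao-self-closedness) is `≤`-maximal in
`X(T,≤) = {x : x ≤ Tx}`. -/
theorem fixedPoint_le_maximal {X : Type*} [MetricSpace X]
    (le : X → X → Prop) (hrefl : ∀ x : X, le x x)
    (htrans : ∀ x y z : X, le x y → le y z → le x z)
    (T : X → X) (hincr : ∀ x y : X, le x y → le (T x) (T y))
    (α : ℝ) (hα0 : 0 < α) (hα1 : α < 1)
    (hcontr : ∀ x y : X, (le x y ∨ le y x) →
      (1 / (1 + α)) * max (dist x (T x)) (dist y (T x)) ≤ dist x y →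
      dist (T x) (T y) ≤ α * dist x y)
    (haocomplete : ∀ z : ℕ → X, (∀ i j : ℕ, i ≤ j → le (z i) (z j)) →
      (∃ x : X, ∀ n, z n = T^[n] x) → CauchySeq z →
      ∃ l : X, Tendsto z atTop (𝓝 l))
    (haoselfclosed : ∀ (z : ℕ → X) (l : X), (∀ i j : ℕ, i ≤ j → le (z i) (z j)) →
      (∃ x : X, ∀ n, z n = T^[n] x) → Tendsto z atTop (𝓝 l) →
      ∀ n, le (z n) l) :
    ∀ xs : X, T xs = xs → ∀ u : X, le u (T u) → le xs u → le u xs := by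
  intro xs hfix u hu hxu
  set z : ℕ → X := fun n => T^[n] u with hz
  have hstep : ∀ n, le (z n) (z (n + 1)) := by
    intro n
    induction n with
    | zero => simpa [hz] using hu
    | succ k ih =>
      have : le (T (z k)) (T (z (k + 1))) := hincr _ _ ih
      simpa [hz, Function.iterate_succ_apply'] using this
  have hasc : ∀ i j : ℕ, i ≤ j → le (z i) (z j) := by
    intro i j hij
    induction j with
    | zero => simpa [Nat.le_zero.mp hij] using hrefl (z 0)
    | succ k ih =>
      rcases Nat.lt_or_ge i (k + 1) with h | h
      · exact htrans _ _ _ (ih (Nat.lt_succ_iff.mp h)) (hstep k)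
      · have : i = k + 1 := le_antisymm hij h
        subst this; exact hrefl _
  have hxsz : ∀ n, le xs (z n) := fun n => htrans _ _ _ hxu (hasc 0 n (Nat.zero_le n))
  have hdist : ∀ n, dist xs (z n) ≤ α ^ n * dist xs u := by
    intro n
    induction n with
    | zero => simp [hz]
    | succ k ih =>
      have hcond : (1 / (1 + α)) * max (dist xs (T xs)) (dist (z k) (T xs))
          ≤ dist xs (z k) := by
        rw [hfix]
        have h1 : max (dist xs xs) (dist (z k) xs) = dist (z k) xs := by
          simp [max_eq_right dist_nonneg]
        rw [h1, dist_comm (z k) xs]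
        have h2 : (1 : ℝ) / (1 + α) ≤ 1 := by
          rw [div_le_one (by linarith)]; linarith
        nlinarith [dist_nonneg (x := xs) (y := z k)]
      have h3 : dist (T xs) (T (z k)) ≤ α * dist xs (z k) :=
        hcontr xs (z k) (Or.inl (hxsz k)) hcond
      have h4 : dist xs (z (k + 1)) = dist (T xs) (T (z k)) := by
        rw [hfix]; simp only [hz, Function.iterate_succ_apply']
      rw [h4, pow_succ']
      calc dist (T xs) (T (z k)) ≤ α * dist xs (z k) := h3
        _ ≤ α * (α ^ k * dist xs u) := by
            exact mul_le_mul_of_nonneg_left ih hα0.le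
        _ = α * α ^ k * dist xs u := by ring
  have htend : Tendsto z atTop (𝓝 xs) := by
    rw [tendsto_iff_dist_tendsto_zero]
    have hb : ∀ n, dist (z n) xs ≤ α ^ n * dist xs u := fun n => by
      rw [dist_comm]; exact hdist n
    refine squeeze_zero (g := fun n => α ^ n * dist xs u) (fun n => dist_nonneg) hb ?_
    simpa using (tendsto_pow_atTop_nhds_zero_of_lt_one hα0.le hα1).mul_const (dist xs u)
  have := haoselfclosed z xs hasc ⟨u, fun n => rfl⟩ htend 0
  simpa [hz] using this
end

section
/- Let (X,D,≤) be an ordered metrizable uniform space such that ≤ is interval-closed. Then an increasing sequence (x_n) in X is relatively compact if and only if it D-converges to some element x of X. -/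
open Filter Topology

/-- `D`-convergence of a sequence in a metrizable uniform space given by the
countable family of pseudometrics `D`. -/
def DConv {X : Type*} (D : ℕ → X → X → ℝ) (x : ℕ → X) (l : X) : Prop :=
  ∀ i : ℕ, Tendsto (fun n => D i (x n) l) atTop (𝓝 0)

/-- A sequence is relatively compact if every subsequence contains a
`D`-convergent subsequence. -/
def RelCompactSeq {X : Type*} (D : ℕ → X → X → ℝ) (x : ℕ → X) : Prop :=
  ∀ q : ℕ → ℕ, StrictMono q →
    ∃ p : ℕ → ℕ, StrictMono p ∧ ∃ l : X, DConv D (fun n => x (q (p n))) l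

/-- A subset is order closed when the limit of any `D`-convergent increasing
sequence in it belongs to it. -/
def OrderClosed {X : Type*} [PartialOrder X] (D : ℕ → X → X → ℝ) (Y : Set X) : Prop :=
  ∀ (z : ℕ → X) (l : X), (∀ n, z n ∈ Y) → (∀ i j : ℕ, i ≤ j → z i ≤ z j) →
    DConv D z l → l ∈ Y

/-- The ordering is interval closed when all sets `[x,≤)` and `(≤,x]` are
order closed. -/
def IntervalClosed {X : Type*} [PartialOrder X] (D : ℕ → X → X → ℝ) : Prop :=
  ∀ x : X, OrderClosed D {y | x ≤ y} ∧ OrderClosed D {y | y ≤ x}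

/-- Lemma 1: in an ordered metrizable uniform space with interval-closed order,
an increasing sequence is relatively compact iff it `D`-converges. -/
theorem increasing_relCompact_iff_conv {X : Type*} [PartialOrder X] [Nonempty X]
    (D : ℕ → X → X → ℝ)
    (hD0 : ∀ i (x : X), D i x x = 0)
    (hDsymm : ∀ i (x y : X), D i x y = D i y x)
    (hDtri : ∀ i (x y z : X), D i x z ≤ D i x y + D i y z)
    (hDsuff : ∀ x y : X, (∀ i, D i x y = 0) → x = y)
    (hic : IntervalClosed D)
    (x : ℕ → X) (hmono : ∀ i j : ℕ, i ≤ j → x i ≤ x j) :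
    RelCompactSeq D x ↔ ∃ l : X, DConv D x l := by
  have hDnonneg : ∀ i (a b : X), 0 ≤ D i a b := by
    intro i a b
    have h := hDtri i a b a
    rw [hD0, hDsymm i b a] at h
    linarith
  -- For any strictly monotone φ, if x∘φ D-converges to l, then every x n ≤ l.
  have hub : ∀ (φ : ℕ → ℕ), StrictMono φ → ∀ l : X,
      DConv D (fun n => x (φ n)) l → ∀ n, x n ≤ l := by
    intro φ hφ l hl n
    have := (hic (x n)).1 (fun m => x (φ (m + n))) l
      (fun m => hmono n (φ (m + n)) (le_trans (Nat.le_add_left n m) (hφ.id_le (m + n))))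
      (fun i j hij => hmono _ _ (hφ.monotone (by omega)))
      (fun i => (hl i).comp (tendsto_add_atTop_nat n))
    exact this
  -- uniqueness of limits of convergent increasing subsequences
  have huniq : ∀ (φ ψ : ℕ → ℕ), StrictMono φ → StrictMono ψ → ∀ l l' : X,
      DConv D (fun n => x (φ n)) l → DConv D (fun n => x (ψ n)) l' → l = l' := by
    intro φ ψ hφ hψ l l' hl hl'
    have h1 : l ≤ l' := by
      refine (hic l').2 (fun n => x (φ n)) l
        (fun n => hub ψ hψ l' hl' (φ n))
        (fun i j hij => hmono _ _ (hφ.monotone hij)) hl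
    have h2 : l' ≤ l := by
      refine (hic l).2 (fun n => x (ψ n)) l'
        (fun n => hub φ hφ l hl (ψ n))
        (fun i j hij => hmono _ _ (hψ.monotone hij)) hl'
    exact le_antisymm h1 h2
  constructor
  · intro hrc
    obtain ⟨p, hp, l, hl⟩ := hrc id strictMono_id
    refine ⟨l, ?_⟩
    intro i
    rw [Metric.tendsto_atTop]
    intro ε hε
    by_contra hcon
    push_neg at hcon
    have hfreq : ∃ᶠ n in atTop, ε ≤ D i (x n) l := by
      rw [frequently_atTop]
      intro N
      obtain ⟨n, hnN, hn⟩ := hcon N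
      refine ⟨n, hnN, ?_⟩
      rw [Real.dist_eq, abs_sub_comm, abs_of_nonpos (by linarith [hDnonneg i (x n) l])] at hn
      linarith
    obtain ⟨q, hq, hqP⟩ := Filter.extraction_of_frequently_atTop hfreq
    obtain ⟨p', hp', l', hl'⟩ := hrc q hq
    have hll' : l = l' := huniq p (q ∘ p') hp (hq.comp hp') l l' hl hl'
    have := hll' ▸ hl' i
    rw [Metric.tendsto_atTop] at this
    obtain ⟨N, hN⟩ := this (ε) hε
    have h1 := hN N le_rfl
    have h2 := hqP (p' N)
    rw [Real.dist_eq, abs_sub_comm,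
      abs_of_nonpos (by linarith [hDnonneg i (x (q (p' N))) l])] at h1
    simp only at h1
    linarith
  · rintro ⟨l, hl⟩
    intro q hq
    refine ⟨id, strictMono_id, l, fun i => ?_⟩
    exact (hl i).comp (hq.comp strictMono_id).tendsto_atTop
end

section
/- Let (X,D,≤) be an ordered metrizable uniform space with ≤ interval-closed. Let Y be an order-closed subset of X, T : Y → Y an increasing map, and Y_oi = {x ∈ Y : x ≤ Tx} nonempty. Assume (d03): every increasing sequence (x_n) in Y such that x_n ∈ T^{k(n)}(Y_oi) for all n, for some strictly increasing sequence (k(n)) of natural numbers, is relatively compact. Then for every u ∈ Y_oi there exists v ∈ Y with v = Tv such that (a) u ≤ v, and (b) whenever w ∈ Y_oi satisfies v ≤ w, one has v = w. -/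
open Filter Topology

section FixedPointMachinery

open Ordinal Cardinal

open Classical in
/-- classical choice with a default value -/
noncomputable def pickOr {α : Sort*} (P : α → Prop) (d : α) : α :=
  if h : ∃ a, P a then Classical.choose h else d

lemma pickOr_spec {α : Sort*} {P : α → Prop} (h : ∃ a, P a) (d : α) : P (pickOr P d) := by
  rw [pickOr]
  rw [dif_pos h]
  exact Classical.choose_spec h

/-- helper: choose a strictly monotone sequence of witnesses -/
lemma nat_rec_choice {P : ℕ → ℕ → Prop} (h : ∀ n N, ∃ j, N < j ∧ P n j) :
    ∃ q : ℕ → ℕ, StrictMono q ∧ ∀ n, P n (q n) := by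
  choose f hf1 hf2 using h
  refine ⟨fun n => Nat.rec (f 0 0) (fun n ih => f (n + 1) ih) n,
    strictMono_nat_of_lt_succ (fun n => hf1 _ _), fun n => ?_⟩
  cases n with
  | zero => exact hf2 0 0
  | succ m => exact hf2 _ _

/-- the first uncountable ordinal -/
noncomputable def kappaOrd : Ordinal.{0} := (Cardinal.aleph 1).ord

lemma kappa_isLimit : Order.IsSuccLimit kappaOrd := Cardinal.isSuccLimit_ord (Cardinal.aleph0_le_aleph 1)

/-- a choice of a strictly monotone cofinal sequence in a countable limit ordinal -/
noncomputable def cofSeq (lam : Ordinal.{0}) : ℕ → Ordinal.{0} :=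
  pickOr (fun g : ℕ → Ordinal.{0} =>
    StrictMono g ∧ (∀ n, g n < lam) ∧ ∀ p, p < lam → ∃ n, p ≤ g n) (fun _ => 0)

lemma cofSeq_lt {lam : Ordinal.{0}} (hl : Order.IsSuccLimit lam) (n : ℕ) : cofSeq lam n < lam := by
  rw [cofSeq, pickOr]
  split_ifs with h
  · exact (Classical.choose_spec h).2.1 n
  · exact hl.pos

lemma cofSeq_ex {lam : Ordinal.{0}} (hl : Order.IsSuccLimit lam) (hk : lam < kappaOrd) :
    ∃ g : ℕ → Ordinal.{0},
      StrictMono g ∧ (∀ n, g n < lam) ∧ ∀ p, p < lam → ∃ n, p ≤ g n := by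
  have hcard : lam.card < Cardinal.aleph 1 := Cardinal.lt_ord.mp hk
  have hcard0 : lam.card ≤ Cardinal.aleph0 := by
    rwa [← Cardinal.succ_aleph0, Order.lt_succ_iff] at hcard
  have hcount : Countable lam.ToType := by
    rw [← Cardinal.mk_le_aleph0_iff, Cardinal.mk_toType]; exact hcard0
  have hne : Nonempty lam.ToType := Ordinal.nonempty_toType_iff.mpr (Ordinal.isSuccLimit_iff.mp hl).1
  obtain ⟨f, hf⟩ := exists_surjective_nat lam.ToType
  set e := (Ordinal.ToType.mk (o := lam)) with he
  set f' : ℕ → Ordinal.{0} := fun n => (e.symm (f n)).1 with hf'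
  have hf'lt : ∀ n, f' n < lam := fun n => (e.symm (f n)).2
  have hf'sur : ∀ p, p < lam → ∃ n, f' n = p := by
    intro p hp
    obtain ⟨n, hn⟩ := hf (e ⟨p, hp⟩)
    refine ⟨n, ?_⟩
    rw [hf']
    simp only [hn, OrderIso.symm_apply_apply]
  set g : ℕ → Ordinal.{0} := fun n => Nat.rec (f' 0) (fun n ih => max (ih + 1) (f' (n + 1))) n
    with hg
  have hg0 : g 0 = f' 0 := rfl
  have hgs : ∀ n, g (n + 1) = max (g n + 1) (f' (n + 1)) := fun _ => rfl
  have hglt : ∀ n, g n < lam := by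
    intro n
    induction n with
    | zero => exact hf'lt 0
    | succ m ih =>
        rw [hgs m]
        refine max_lt ?_ (hf'lt (m + 1))
        rw [Ordinal.add_one_eq_succ]
        exact hl.succ_lt ih
  have hgmono : StrictMono g := by
    apply strictMono_nat_of_lt_succ
    intro n
    rw [hgs n]
    refine lt_of_lt_of_le ?_ (le_max_left _ _)
    rw [Ordinal.add_one_eq_succ]
    exact Order.lt_succ _
  refine ⟨g, hgmono, hglt, ?_⟩
  intro p hp
  obtain ⟨n, hn⟩ := hf'sur p hp
  cases n with
  | zero => exact ⟨0, le_of_eq (hn ▸ hg0.symm ▸ rfl)⟩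
  | succ m =>
      refine ⟨m + 1, ?_⟩
      rw [← hn, hgs m]
      exact le_max_right _ _

lemma cofSeq_spec {lam : Ordinal.{0}} (hl : Order.IsSuccLimit lam) (hk : lam < kappaOrd) :
    StrictMono (cofSeq lam) ∧ (∀ n, cofSeq lam n < lam) ∧
      ∀ p, p < lam → ∃ n, p ≤ cofSeq lam n := by
  rw [cofSeq]
  exact pickOr_spec (cofSeq_ex hl hk) _

universe uX

/-- A bundled context for the fixed point construction. -/
structure FPCtx (X : Type uX) [PartialOrder X] : Type uX where
  D : ℕ → X → X → ℝ
  T : X → X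
  Y : Set X
  u0 : X
  hD0 : ∀ i x, D i x x = 0
  hDsymm : ∀ i x y, D i x y = D i y x
  hDtri : ∀ i x y z, D i x z ≤ D i x y + D i y z
  hDsuff : ∀ x y, (∀ i, D i x y = 0) → x = y
  hic : IntervalClosed D
  hYcl : OrderClosed D Y
  hTY : ∀ x ∈ Y, T x ∈ Y
  hTincr : ∀ x ∈ Y, ∀ y ∈ Y, x ≤ y → T x ≤ T y
  hd03 : ∀ (x : ℕ → X) (k : ℕ → ℕ), StrictMono k → (∀ n, x n ∈ Y) →
    (∀ i j : ℕ, i ≤ j → x i ≤ x j) → (∀ n, x n ∈ T^[k n] '' {y ∈ Y | y ≤ T y}) →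
    RelCompactSeq D x
  hu0Y : u0 ∈ Y
  hu0T : u0 ≤ T u0

namespace FPCtx

variable {X : Type uX} [PartialOrder X] (c : FPCtx X)

def Yoi : Set X := {y ∈ c.Y | y ≤ c.T y}

def M : Set X := {y | y ∈ c.Y ∧ y ≤ c.T y ∧ c.u0 ≤ y}

lemma M_sub_Yoi : c.M ⊆ c.Yoi := fun _ hx => ⟨hx.1, hx.2.1⟩

lemma Dnonneg (i : ℕ) (x y : X) : 0 ≤ c.D i x y := by
  have h := c.hDtri i x y x
  rw [c.hD0, c.hDsymm i y x] at h
  linarith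

lemma iter_mem {x : X} (hx : x ∈ c.Y) (m : ℕ) : c.T^[m] x ∈ c.Y := by
  induction m with
  | zero => simpa
  | succ n ih =>
      rw [Function.iterate_succ_apply']
      exact c.hTY _ ih

lemma iter_mono {x y : X} (hx : x ∈ c.Y) (hy : y ∈ c.Y) (hxy : x ≤ y) (m : ℕ) :
    c.T^[m] x ≤ c.T^[m] y := by
  induction m with
  | zero => simpa
  | succ n ih =>
      rw [Function.iterate_succ_apply', Function.iterate_succ_apply']
      exact c.hTincr _ (c.iter_mem hx n) _ (c.iter_mem hy n) ih

lemma iter_oi {x : X} (hx : x ∈ c.Yoi) (m : ℕ) : c.T^[m] x ∈ c.Yoi := by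
  refine ⟨c.iter_mem hx.1 m, ?_⟩
  have h : c.T (c.T^[m] x) = c.T^[m] (c.T x) := by
    rw [← Function.iterate_succ_apply' c.T m x, Function.iterate_succ_apply]
  rw [h]
  exact c.iter_mono hx.1 (c.hTY _ hx.1) hx.2 m

lemma iter_le_iter {x : X} (hx : x ∈ c.Yoi) : Monotone (fun m => c.T^[m] x) := by
  apply monotone_nat_of_le_succ
  intro m
  show c.T^[m] x ≤ c.T^[m + 1] x
  rw [Function.iterate_succ_apply']
  exact (c.iter_oi hx m).2

lemma le_iter {x : X} (hx : x ∈ c.Yoi) (m : ℕ) : x ≤ c.T^[m] x := by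
  have := c.iter_le_iter hx (Nat.zero_le m)
  simpa using this

lemma dconv_upper {z : ℕ → X} {l : X} (hm : ∀ i j : ℕ, i ≤ j → z i ≤ z j)
    (hz : DConv c.D z l) (n : ℕ) : z n ≤ l := by
  have h := (c.hic (z n)).1 (fun m => z (m + n)) l
    (fun m => hm n (m + n) (Nat.le_add_left n m))
    (fun i j hij => hm _ _ (Nat.add_le_add_right hij n))
    (fun i => (hz i).comp (tendsto_add_atTop_nat n))
  exact h

lemma dconv_lower {z : ℕ → X} {l b : X} (hm : ∀ i j : ℕ, i ≤ j → z i ≤ z j)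
    (hb : ∀ n, z n ≤ b) (hz : DConv c.D z l) : l ≤ b :=
  (c.hic b).2 z l hb hm hz

lemma yoi_closed {z : ℕ → X} {l : X} (hzm : ∀ n, z n ∈ c.Yoi)
    (hm : ∀ i j : ℕ, i ≤ j → z i ≤ z j) (hz : DConv c.D z l) : l ∈ c.Yoi := by
  have hlY : l ∈ c.Y := c.hYcl z l (fun n => (hzm n).1) hm hz
  refine ⟨hlY, ?_⟩
  have hb : ∀ n, z n ≤ c.T l := fun n =>
    le_trans (hzm n).2 (c.hTincr _ (hzm n).1 _ hlY (c.dconv_upper hm hz n))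
  exact c.dconv_lower hm hb hz

/-- the property of being a "limit with structure" of the orbit of `x`. -/
def SuccGood (x l : X) : Prop :=
  l ∈ c.Yoi ∧ (∀ m, c.T^[m] x ≤ l) ∧
    ∃ r : ℕ → ℕ, StrictMono r ∧ DConv c.D (fun m => c.T^[r m] x) l

lemma succ_exists {x : X} (hx : x ∈ c.Yoi) : ∃ l, c.SuccGood x l := by
  have hrc := c.hd03 (fun n => c.T^[n] x) id strictMono_id (fun n => c.iter_mem hx.1 n)
    (fun i j hij => c.iter_le_iter hx hij) (fun n => ⟨x, hx, rfl⟩)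
  obtain ⟨p, hp, l, hl⟩ := hrc id strictMono_id
  have hl' : DConv c.D (fun n => c.T^[p n] x) l := hl
  have hmono : ∀ i j : ℕ, i ≤ j → c.T^[p i] x ≤ c.T^[p j] x :=
    fun i j hij => c.iter_le_iter hx (hp.monotone hij)
  refine ⟨l, c.yoi_closed (fun n => c.iter_oi hx _) hmono hl', ?_, p, hp, hl'⟩
  intro m
  exact le_trans (c.iter_le_iter hx hp.le_apply) (c.dconv_upper hmono hl' m)

/-- the property we require of values of the transfinite sequence at limit stages. -/
def LimGood (w t : ℕ → X) (L : X) : Prop :=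
  L ∈ c.Yoi ∧ (∀ n, w n ≤ L) ∧
    (∃ r : ℕ → ℕ, StrictMono r ∧ DConv c.D (fun n => t (r n)) L) ∧
    ∀ b, (∀ n, t n ≤ b) → L ≤ b

/-- Core construction: a `d03`-compactness upper bound for a "telescoping" chain. -/
lemma core {w t : ℕ → X} (h1 : ∀ n, w n ∈ c.Yoi) (h2 : ∀ n m, c.T^[m] (w n) ≤ t n)
    (h3 : ∀ n, ∃ r : ℕ → ℕ, StrictMono r ∧ DConv c.D (fun m => c.T^[r m] (w n)) (t n))
    (h4 : ∀ n, t n ≤ w (n + 1)) : ∃ L, c.LimGood w t L := by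
  have hstep : ∀ n N : ℕ, ∃ j : ℕ, N < j ∧
      ∀ i < n + 1, c.D i (c.T^[j] (w n)) (t n) < 1 / ((n : ℝ) + 1) := by
    intro n N
    obtain ⟨r, hr, hconv⟩ := h3 n
    have hpos : (0 : ℝ) < 1 / ((n : ℝ) + 1) := by positivity
    have hev : ∀ᶠ m in atTop, ∀ i ∈ Finset.range (n + 1),
        c.D i (c.T^[r m] (w n)) (t n) < 1 / ((n : ℝ) + 1) := by
      rw [eventually_all_finset]
      intro i _
      exact (hconv i).eventually_lt_const hpos
    obtain ⟨m, hm1, hm2⟩ := (hev.and (eventually_gt_atTop N)).exists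
    refine ⟨r m, lt_of_lt_of_le hm2 hr.le_apply, ?_⟩
    intro i hi
    exact hm1 i (Finset.mem_range.mpr hi)
  obtain ⟨q, hqmono, hA⟩ := nat_rec_choice hstep
  have hhY : ∀ n, c.T^[q n] (w n) ∈ c.Y := fun n => c.iter_mem (h1 n).1 _
  have hhoi : ∀ n, c.T^[q n] (w n) ∈ c.Yoi := fun n => c.iter_oi (h1 n) _
  have hstep2 : ∀ n, c.T^[q n] (w n) ≤ c.T^[q (n + 1)] (w (n + 1)) := by
    intro n
    have e1 : c.T^[q (n + 1)] (c.T^[q n] (w n)) ≤ c.T^[q (n + 1)] (w (n + 1)) :=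
      c.iter_mono (hhY n) (h1 (n + 1)).1 (le_trans (h2 n (q n)) (h4 n)) _
    exact le_trans (c.le_iter (hhoi n) _) e1
  have hhmono : ∀ i j : ℕ, i ≤ j → c.T^[q i] (w i) ≤ c.T^[q j] (w j) := fun i j hij =>
    (monotone_nat_of_le_succ hstep2) hij
  have hrc := c.hd03 (fun n => c.T^[q n] (w n)) q hqmono hhY hhmono
    (fun n => ⟨w n, h1 n, rfl⟩)
  obtain ⟨p, hp, L, hL⟩ := hrc id strictMono_id
  have hL' : DConv c.D (fun n => c.T^[q (p n)] (w (p n))) L := hL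
  have hmono' : ∀ i j : ℕ, i ≤ j → c.T^[q (p i)] (w (p i)) ≤ c.T^[q (p j)] (w (p j)) :=
    fun i j hij => hhmono _ _ (hp.monotone hij)
  have hup : ∀ n, c.T^[q (p n)] (w (p n)) ≤ L := fun n => c.dconv_upper hmono' hL' n
  refine ⟨L, c.yoi_closed (fun n => hhoi _) hmono' hL', ?_, ⟨p, hp, ?_⟩, ?_⟩
  · intro n
    exact le_trans (c.le_iter (h1 n) (q n)) (le_trans (hhmono n (p n) hp.le_apply) (hup n))
  · intro i
    have hnon : ∀ᶠ n in atTop, 0 ≤ c.D i (t (p n)) L :=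
      Eventually.of_forall (fun n => c.Dnonneg i _ _)
    have hbound : ∀ᶠ n in atTop,
        c.D i (t (p n)) L ≤ 1 / ((n : ℝ) + 1) + c.D i (c.T^[q (p n)] (w (p n))) L := by
      filter_upwards [eventually_ge_atTop i] with n hn
      have h5 := c.hDtri i (t (p n)) (c.T^[q (p n)] (w (p n))) L
      have h6 : c.D i (t (p n)) (c.T^[q (p n)] (w (p n)))
          = c.D i (c.T^[q (p n)] (w (p n))) (t (p n)) := c.hDsymm i _ _
      have h7 : c.D i (c.T^[q (p n)] (w (p n))) (t (p n)) < 1 / ((p n : ℝ) + 1) :=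
        hA (p n) i (Nat.lt_succ_of_le (le_trans hn hp.le_apply))
      have h8 : (1 : ℝ) / ((p n : ℝ) + 1) ≤ 1 / ((n : ℝ) + 1) := by
        apply one_div_le_one_div_of_le
        · positivity
        · exact_mod_cast Nat.succ_le_succ hp.le_apply
      linarith
    have hlim : Tendsto (fun n : ℕ => 1 / ((n : ℝ) + 1)
        + c.D i (c.T^[q (p n)] (w (p n))) L) atTop (𝓝 0) := by
      have := tendsto_one_div_add_atTop_nhds_zero_nat.add (hL' i)
      simpa using this
    exact squeeze_zero' hnon hbound hlim
  · intro b hb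
    exact c.dconv_lower hmono' (fun n => le_trans (h2 (p n) (q (p n))) (hb (p n))) hL'


end FPCtx

/-- Context extended with the assumption that `M` has no maximal element. -/
structure FPCtx2 (X : Type uX) [PartialOrder X] extends FPCtx X where
  hnomax : ∀ x, x ∈ toFPCtx.M → ∃ y, y ∈ toFPCtx.M ∧ x ≤ y ∧ x ≠ y

namespace FPCtx2

variable {X : Type uX} [PartialOrder X] (c : FPCtx2 X)

/-- choice of a strict dominator in `M` -/
noncomputable def W (x : X) : X :=
  pickOr (fun y => y ∈ c.M ∧ x ≤ y ∧ x ≠ y) x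

lemma W_mem {x : X} (hx : x ∈ c.M) : c.W x ∈ c.M ∧ x ≤ c.W x ∧ x ≠ c.W x := by
  rw [W]
  exact pickOr_spec (c.hnomax x hx) x

/-- choice of a structured upper bound of the orbit of `x` -/
noncomputable def Lstar (x : X) : X :=
  pickOr (c.SuccGood x) x

lemma Lstar_spec {x : X} (hx : x ∈ c.Yoi) : c.SuccGood x (c.Lstar x) := by
  rw [Lstar]
  exact pickOr_spec (c.succ_exists hx) x

/-- the transfinite sequence -/
noncomputable def seq : Ordinal.{0} → X := fun o =>
  Ordinal.limitRecOn (motive := fun _ => X) o c.u0 (fun _ prev => c.Lstar (c.W prev))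
    (fun o ho rec =>
      pickOr (c.LimGood (fun n => c.W (rec (cofSeq o n) (cofSeq_lt ho n)))
        (fun n => rec (cofSeq o n + 1)
          (by rw [Ordinal.add_one_eq_succ]; exact ho.succ_lt (cofSeq_lt ho n)))) c.u0)

lemma seq_zero : c.seq 0 = c.u0 := by
  unfold seq
  rw [Ordinal.limitRecOn_zero]

lemma seq_succ (p : Ordinal.{0}) : c.seq (p + 1) = c.Lstar (c.W (c.seq p)) := by
  unfold seq
  rw [Ordinal.add_one_eq_succ, Ordinal.limitRecOn_succ]

/-- the `w`-sequence used at a limit stage -/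
noncomputable def wseq (o : Ordinal.{0}) (n : ℕ) : X := c.W (c.seq (cofSeq o n))

/-- the `t`-sequence used at a limit stage -/
noncomputable def tseq (o : Ordinal.{0}) (n : ℕ) : X := c.seq (cofSeq o n + 1)

lemma seq_limit {o : Ordinal.{0}} (ho : Order.IsSuccLimit o) :
    c.seq o = pickOr (c.LimGood (c.wseq o) (c.tseq o)) c.u0 := by
  unfold seq wseq tseq
  rw [Ordinal.limitRecOn_limit _ _ _ _ ho]
  rfl

/-- The main invariant, proven by transfinite induction. -/
lemma inv (o : Ordinal.{0}) : o < kappaOrd →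
    c.seq o ∈ c.M ∧ (∀ p, p < o → c.seq p ≤ c.seq o) ∧
      (Order.IsSuccLimit o → ∃ L, c.LimGood (c.wseq o) (c.tseq o) L) := by
  induction o using Ordinal.induction with
  | _ o IH =>
  intro ho
  rcases Ordinal.zero_or_succ_or_isSuccLimit o with h0 | ⟨p, hp⟩ | hlim
  · subst h0
    refine ⟨?_, ?_, ?_⟩
    · rw [c.seq_zero]
      exact ⟨c.hu0Y, c.hu0T, le_refl _⟩
    · intro p hp
      exact absurd hp (not_lt_of_ge (zero_le (a := p)))
    · intro h
      exact absurd h Ordinal.not_isSuccLimit_zero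
  · subst hp
    have hpk : p < kappaOrd := lt_trans (Order.lt_succ p) ho
    obtain ⟨hpM, hpchain, -⟩ := IH p (Order.lt_succ p) hpk
    have hW := c.W_mem hpM
    have hWoi : c.W (c.seq p) ∈ c.Yoi := c.M_sub_Yoi hW.1
    have hsg : c.SuccGood (c.W (c.seq p)) (c.seq (Order.succ p)) := by
      rw [← Ordinal.add_one_eq_succ, c.seq_succ]
      exact c.Lstar_spec hWoi
    have hWle : c.W (c.seq p) ≤ c.seq (Order.succ p) := by
      have := hsg.2.1 0
      simpa using this
    have hple : c.seq p ≤ c.seq (Order.succ p) := le_trans hW.2.1 hWle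
    refine ⟨⟨hsg.1.1, hsg.1.2, le_trans hpM.2.2 hple⟩, ?_,
      fun hl => absurd hl (Order.not_isSuccLimit_succ p)⟩
    intro q hq
    rcases (Order.lt_succ_iff.mp hq).lt_or_eq with h | h
    · exact le_trans (hpchain q h) hple
    · rw [h]
      exact hple
  · -- limit case
    obtain ⟨hgm, hglt, hgcof⟩ := cofSeq_spec hlim ho
    have hak : ∀ n, cofSeq o n < kappaOrd := fun n => lt_trans (hglt n) ho
    have hMn : ∀ n, c.seq (cofSeq o n) ∈ c.M := fun n => (IH _ (hglt n) (hak n)).1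
    have hWn := fun n => c.W_mem (hMn n)
    have h1 : ∀ n, c.wseq o n ∈ c.Yoi := fun n => c.M_sub_Yoi (hWn n).1
    have hsgn : ∀ n, c.SuccGood (c.wseq o n) (c.tseq o n) := by
      intro n
      have h := c.seq_succ (cofSeq o n)
      rw [tseq, h]
      exact c.Lstar_spec (h1 n)
    have h4 : ∀ n, c.tseq o n ≤ c.wseq o (n + 1) := by
      intro n
      have hlt1 : cofSeq o n + 1 ≤ cofSeq o (n + 1) := by
        rw [Ordinal.add_one_eq_succ]
        exact Order.succ_le_of_lt (hgm (Nat.lt_succ_self n))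
      have hle1 : c.seq (cofSeq o n + 1) ≤ c.seq (cofSeq o (n + 1)) := by
        rcases hlt1.lt_or_eq with h | h
        · exact (IH _ (hglt (n + 1)) (hak (n + 1))).2.1 _ h
        · rw [h]
      exact le_trans hle1 (hWn (n + 1)).2.1
    have hLex : ∃ L, c.LimGood (c.wseq o) (c.tseq o) L :=
      c.core h1 (fun n m => (hsgn n).2.1 m) (fun n => (hsgn n).2.2) h4
    have hGoodv : c.LimGood (c.wseq o) (c.tseq o) (c.seq o) := by
      rw [c.seq_limit hlim]
      exact pickOr_spec hLex c.u0
    have hchain : ∀ p, p < o → c.seq p ≤ c.seq o := by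
      intro p hp
      obtain ⟨n, hn⟩ := hgcof p hp
      have h5 : c.seq p ≤ c.seq (cofSeq o n) := by
        rcases hn.lt_or_eq with h | h
        · exact (IH _ (hglt n) (hak n)).2.1 _ h
        · rw [h]
      exact le_trans h5 (le_trans (hWn n).2.1 (hGoodv.2.1 n))
    have hu0le : c.u0 ≤ c.seq o :=
      le_trans (hMn 0).2.2 (le_trans (hWn 0).2.1 (hGoodv.2.1 0))
    exact ⟨⟨hGoodv.1.1, hGoodv.1.2, hu0le⟩, hchain, fun _ => hLex⟩

lemma chain_le {p o : Ordinal.{0}} (hpo : p ≤ o) (ho : o < kappaOrd) :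
    c.seq p ≤ c.seq o := by
  rcases hpo.lt_or_eq with h | h
  · exact (c.inv o ho).2.1 p h
  · rw [h]

lemma good_limit {lam : Ordinal.{0}} (hlim : Order.IsSuccLimit lam) (hk : lam < kappaOrd) :
    c.LimGood (c.wseq lam) (c.tseq lam) (c.seq lam) := by
  rw [c.seq_limit hlim]
  exact pickOr_spec ((c.inv lam hk).2.2 hlim) c.u0

lemma conv_core {lam : Ordinal.{0}} (hlim : Order.IsSuccLimit lam) (hk : lam < kappaOrd)
    (d : ℕ → Ordinal.{0}) (hd : StrictMono d) (hlt : ∀ n, d n < lam)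
    (hcof : ∀ p, p < lam → ∃ n, p ≤ d n) :
    ∃ r : ℕ → ℕ, StrictMono r ∧
      DConv c.D (fun n => c.seq (d (r n) + 1)) (c.seq lam) := by
  have hdk : ∀ n, d n < kappaOrd := fun n => lt_trans (hlt n) hk
  have hMn : ∀ n, c.seq (d n) ∈ c.M := fun n => (c.inv _ (hdk n)).1
  have hWn := fun n => c.W_mem (hMn n)
  have h1 : ∀ n, c.W (c.seq (d n)) ∈ c.Yoi := fun n => c.M_sub_Yoi (hWn n).1
  have hsucclt : ∀ n, d n + 1 < lam := by
    intro n
    rw [Ordinal.add_one_eq_succ]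
    exact hlim.succ_lt (hlt n)
  have hsucck : ∀ n, d n + 1 < kappaOrd := fun n => lt_trans (hsucclt n) hk
  have hsgn : ∀ n, c.SuccGood (c.W (c.seq (d n))) (c.seq (d n + 1)) := by
    intro n
    rw [c.seq_succ (d n)]
    exact c.Lstar_spec (h1 n)
  have h4 : ∀ n, c.seq (d n + 1) ≤ c.W (c.seq (d (n + 1))) := by
    intro n
    have hlt1 : d n + 1 ≤ d (n + 1) := by
      rw [Ordinal.add_one_eq_succ]
      exact Order.succ_le_of_lt (hd (Nat.lt_succ_self n))
    exact le_trans (c.chain_le hlt1 (hdk (n + 1))) (hWn (n + 1)).2.1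
  obtain ⟨L, hL⟩ := c.core h1 (fun n m => (hsgn n).2.1 m) (fun n => (hsgn n).2.2) h4
  have hupper : ∀ p, p < lam → c.seq p ≤ L := by
    intro p hp
    obtain ⟨n, hn⟩ := hcof p hp
    exact le_trans (c.chain_le hn (hdk n)) (le_trans (hWn n).2.1 (hL.2.1 n))
  have hL_le : L ≤ c.seq lam :=
    hL.2.2.2 (c.seq lam) (fun n => c.chain_le (hsucclt n).le hk)
  have hv_le : c.seq lam ≤ L := by
    apply (c.good_limit hlim hk).2.2.2 L
    intro n
    apply hupper
    rw [Ordinal.add_one_eq_succ]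
    exact hlim.succ_lt (cofSeq_lt hlim n)
  have hveq : c.seq lam = L := le_antisymm hv_le hL_le
  obtain ⟨r, hr, hDC⟩ := hL.2.2.1
  rw [← hveq] at hDC
  exact ⟨r, hr, hDC⟩

lemma conv {lam : Ordinal.{0}} (hlim : Order.IsSuccLimit lam) (hk : lam < kappaOrd)
    (d : ℕ → Ordinal.{0}) (hd : StrictMono d) (hlt : ∀ n, d n < lam)
    (hcof : ∀ p, p < lam → ∃ n, p ≤ d n) (i : ℕ) :
    Tendsto (fun n => c.D i (c.seq (d n + 1)) (c.seq lam)) atTop (𝓝 0) := by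
  apply Filter.tendsto_of_subseq_tendsto
  intro ns hns
  obtain ⟨φ, hφ, hφ2⟩ := strictMono_subseq_of_tendsto_atTop hns
  have hd' : StrictMono (fun n => d (ns (φ n))) := hd.comp hφ2
  have hlt' : ∀ n, d (ns (φ n)) < lam := fun n => hlt _
  have hcof' : ∀ p, p < lam → ∃ n, p ≤ d (ns (φ n)) := by
    intro p hp
    obtain ⟨n, hn⟩ := hcof p hp
    obtain ⟨m, hm⟩ := (hφ2.tendsto_atTop.eventually_ge_atTop n).exists
    exact ⟨m, le_trans hn (hd.monotone hm)⟩
  obtain ⟨r, hr, hDC⟩ := c.conv_core hlim hk _ hd' hlt' hcof'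
  exact ⟨φ ∘ r, hDC i⟩

include c in
lemma absurdity : False := by
  have hklim : Order.IsSuccLimit kappaOrd := kappa_isLimit
  -- strictness at consecutive successors
  have hne : ∀ a : Ordinal.{0}, a + 1 < kappaOrd → c.seq (a + 1) ≠ c.seq (a + 1 + 1) := by
    intro a ha
    have hM := (c.inv _ ha).1
    have hW := c.W_mem hM
    have hsg : c.SuccGood (c.W (c.seq (a + 1))) (c.seq (a + 1 + 1)) := by
      rw [c.seq_succ (a + 1)]
      exact c.Lstar_spec (c.M_sub_Yoi hW.1)
    have h0 : c.W (c.seq (a + 1)) ≤ c.seq (a + 1 + 1) := by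
      have := hsg.2.1 0
      simpa using this
    intro heq
    exact hW.2.2 (le_antisymm hW.2.1 (h0.trans_eq heq.symm))
  -- every successor pair is separated by some pseudometric at some scale
  have hPex : ∀ a : Ordinal.{0}, a < kappaOrd → ∃ i k : ℕ,
      1 / ((k : ℝ) + 1) ≤ c.D i (c.seq (a + 1)) (c.seq (a + 1 + 1)) := by
    intro a ha
    have ha1 : a + 1 < kappaOrd := by
      rw [Ordinal.add_one_eq_succ]
      exact hklim.succ_lt ha
    have hne' := hne a ha1
    have hex : ∃ i, c.D i (c.seq (a + 1)) (c.seq (a + 1 + 1)) ≠ 0 := by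
      by_contra hcon
      push_neg at hcon
      exact hne' (c.hDsuff _ _ hcon)
    obtain ⟨i, hi⟩ := hex
    have hipos : 0 < c.D i (c.seq (a + 1)) (c.seq (a + 1 + 1)) :=
      lt_of_le_of_ne (c.Dnonneg i _ _) (Ne.symm hi)
    obtain ⟨k, hk⟩ := exists_nat_one_div_lt hipos
    exact ⟨i, k, hk.le⟩
  -- pigeonhole: some (i, k) works unboundedly often
  have hunb : ∃ i k : ℕ, ∀ b, b < kappaOrd → ∃ a, b ≤ a ∧ a < kappaOrd ∧
      1 / ((k : ℝ) + 1) ≤ c.D i (c.seq (a + 1)) (c.seq (a + 1 + 1)) := by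
    by_contra hcon
    push_neg at hcon
    have hcon' : ∀ i k : ℕ, ∃ b, b < kappaOrd ∧ ∀ a, b ≤ a → a < kappaOrd →
        ¬(1 / ((k : ℝ) + 1) ≤ c.D i (c.seq (a + 1)) (c.seq (a + 1 + 1))) := by
      intro i k
      obtain ⟨b, hb1, hb2⟩ := hcon i k
      exact ⟨b, hb1, fun a h1 h2 h3 => absurd h3 (not_le.mpr (hb2 a h1 h2))⟩
    choose B hB1 hB2 using hcon'
    have hsup : (⨆ p : ℕ × ℕ, B p.1 p.2) < kappaOrd := by
      show (⨆ p : ℕ × ℕ, B p.1 p.2) < (Cardinal.aleph 1).ord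
      apply Cardinal.iSup_lt_ord_of_isRegular Cardinal.isRegular_aleph_one
      · exact lt_of_le_of_lt Cardinal.mk_le_aleph0 Cardinal.aleph0_lt_aleph_one
      · exact fun p => hB1 p.1 p.2
    obtain ⟨i, k, hik⟩ := hPex _ hsup
    have hle : B i k ≤ ⨆ p : ℕ × ℕ, B p.1 p.2 :=
      Ordinal.le_iSup (fun p : ℕ × ℕ => B p.1 p.2) (i, k)
    exact hB2 i k _ hle hsup hik
  obtain ⟨i, k, hik⟩ := hunb
  -- build a strictly increasing sequence of witnesses
  set Q : Ordinal.{0} → Prop := fun a => a < kappaOrd ∧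
    1 / ((k : ℝ) + 1) ≤ c.D i (c.seq (a + 1)) (c.seq (a + 1 + 1)) with hQ
  have hQstep : ∀ b : {a : Ordinal.{0} // Q a}, ∃ a' : {a : Ordinal.{0} // Q a},
      b.1 < a'.1 := by
    intro b
    have hb1 : b.1 + 1 < kappaOrd := by
      rw [Ordinal.add_one_eq_succ]
      exact hklim.succ_lt b.2.1
    obtain ⟨a, ha1, ha2, ha3⟩ := hik (b.1 + 1) hb1
    refine ⟨⟨a, ha2, ha3⟩, lt_of_lt_of_le ?_ ha1⟩
    rw [Ordinal.add_one_eq_succ]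
    exact Order.lt_succ b.1
  have hQ0 : ∃ a : Ordinal.{0}, Q a := by
    obtain ⟨a, -, ha2, ha3⟩ := hik 0 hklim.pos
    exact ⟨a, ha2, ha3⟩
  obtain ⟨a0, ha0⟩ := hQ0
  choose f hf using hQstep
  set A : ℕ → {a : Ordinal.{0} // Q a} :=
    fun n => Nat.rec ⟨a0, ha0⟩ (fun _ ih => f ih) n with hA
  set al : ℕ → Ordinal.{0} := fun n => (A n).1 with hal
  have halmono : StrictMono al := strictMono_nat_of_lt_succ (fun n => hf (A n))
  have halQ : ∀ n, Q (al n) := fun n => (A n).2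
  set lam : Ordinal.{0} := ⨆ n, al n + 1 with hlam
  have hsucck : ∀ n, al n + 1 < kappaOrd := by
    intro n
    rw [Ordinal.add_one_eq_succ]
    exact hklim.succ_lt (halQ n).1
  have hlamk : lam < kappaOrd := by
    show (⨆ n, al n + 1) < (Cardinal.aleph 1).ord
    apply Cardinal.iSup_lt_ord_of_isRegular Cardinal.isRegular_aleph_one
    · exact lt_of_le_of_lt Cardinal.mk_le_aleph0 Cardinal.aleph0_lt_aleph_one
    · exact hsucck
  have hle_lam : ∀ n, al n + 1 ≤ lam := fun n => Ordinal.le_iSup (fun n => al n + 1) n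
  have hsucc_mono : StrictMono (fun n => al n + 1) := by
    intro a b hab
    show al a + 1 < al b + 1
    rw [Ordinal.add_one_eq_succ, Ordinal.add_one_eq_succ]
    exact Order.succ_lt_succ (halmono hab)
  have hαlt : ∀ n, al n < lam := by
    intro n
    refine lt_of_lt_of_le ?_ (hle_lam n)
    rw [Ordinal.add_one_eq_succ]
    exact Order.lt_succ _
  have hlamlim : Order.IsSuccLimit lam := by
    rw [Ordinal.isSuccLimit_iff, Order.isSuccPrelimit_iff_succ_lt]
    constructor
    · exact (lt_of_le_of_lt zero_le (lt_of_lt_of_le (hαlt 0) le_rfl)).ne'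
    · intro a ha
      obtain ⟨n, hn⟩ := Ordinal.lt_iSup_iff.mp ha
      have h1 : Order.succ a ≤ al n + 1 := Order.succ_le_of_lt hn
      exact lt_of_le_of_lt h1 (lt_of_lt_of_le (hsucc_mono (Nat.lt_succ_self n))
        (hle_lam (n + 1)))
  have hαcof : ∀ p, p < lam → ∃ n, p ≤ al n := by
    intro p hp
    obtain ⟨n, hn⟩ := Ordinal.lt_iSup_iff.mp hp
    rw [Ordinal.add_one_eq_succ] at hn
    exact ⟨n, Order.lt_succ_iff.mp hn⟩
  have hαlt' : ∀ n, al n + 1 < lam := fun n =>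
    lt_of_lt_of_le (hsucc_mono (Nat.lt_succ_self n)) (hle_lam (n + 1))
  have hαcof' : ∀ p, p < lam → ∃ n, p ≤ al n + 1 := by
    intro p hp
    obtain ⟨n, hn⟩ := hαcof p hp
    exact ⟨n, le_trans hn (le_of_lt (by rw [Ordinal.add_one_eq_succ]; exact Order.lt_succ _))⟩
  have hconv1 := c.conv hlamlim hlamk al halmono hαlt hαcof i
  have hconv2 := c.conv hlamlim hlamk (fun n => al n + 1) hsucc_mono hαlt' hαcof' i
  have hsum : Tendsto (fun n => c.D i (c.seq (al n + 1)) (c.seq lam)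
      + c.D i (c.seq (al n + 1 + 1)) (c.seq lam)) atTop (𝓝 0) := by
    have := hconv1.add hconv2
    simpa using this
  have hposk : (0 : ℝ) < 1 / ((k : ℝ) + 1) := by positivity
  obtain ⟨n, hn⟩ := (hsum.eventually_lt_const hposk).exists
  have htri := c.hDtri i (c.seq (al n + 1)) (c.seq lam) (c.seq (al n + 1 + 1))
  have hsymm : c.D i (c.seq lam) (c.seq (al n + 1 + 1))
      = c.D i (c.seq (al n + 1 + 1)) (c.seq lam) := c.hDsymm i _ _
  have hQn := (halQ n).2
  linarith

end FPCtx2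

end FixedPointMachinery

/-- Theorem 6 (first main result, 1986): under hypothesis (d03), every solution
`u` of `x ≤ Tx` is dominated by a fixed point `v` of `T` which is maximal with
respect to solutions of `x ≤ Tx`. -/
theorem comparison_fixed_point_d03 {X : Type*} [PartialOrder X] [Nonempty X]
    (D : ℕ → X → X → ℝ)
    (hD0 : ∀ i (x : X), D i x x = 0)
    (hDsymm : ∀ i (x y : X), D i x y = D i y x)
    (hDtri : ∀ i (x y z : X), D i x z ≤ D i x y + D i y z)
    (hDsuff : ∀ x y : X, (∀ i, D i x y = 0) → x = y)
    (hic : IntervalClosed D)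
    (Y : Set X) (hYclosed : OrderClosed D Y)
    (T : X → X) (hTY : ∀ x ∈ Y, T x ∈ Y)
    (hTincr : ∀ x ∈ Y, ∀ y ∈ Y, x ≤ y → T x ≤ T y)
    (hne : ({x ∈ Y | x ≤ T x} : Set X).Nonempty)
    (hd03 : ∀ (x : ℕ → X) (k : ℕ → ℕ), StrictMono k →
      (∀ n, x n ∈ Y) → (∀ i j : ℕ, i ≤ j → x i ≤ x j) →
      (∀ n, x n ∈ T^[k n] '' {x ∈ Y | x ≤ T x}) →
      RelCompactSeq D x) :
    ∀ u ∈ ({x ∈ Y | x ≤ T x} : Set X), ∃ v ∈ Y, T v = v ∧ u ≤ v ∧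
      ∀ w ∈ ({x ∈ Y | x ≤ T x} : Set X), v ≤ w → v = w := by
  intro u hu
  have key : ∃ v, (v ∈ Y ∧ v ≤ T v ∧ u ≤ v) ∧
      ∀ w, (w ∈ Y ∧ w ≤ T w ∧ u ≤ w) → v ≤ w → v = w := by
    by_contra hk
    push_neg at hk
    have hk' : ∀ x, (x ∈ Y ∧ x ≤ T x ∧ u ≤ x) →
        ∃ y, (y ∈ Y ∧ y ≤ T y ∧ u ≤ y) ∧ x ≤ y ∧ x ≠ y := by
      intro x hx
      obtain ⟨w, hw1, hw2, hw3⟩ := hk x hx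
      exact ⟨w, hw1, hw2, hw3⟩
    exact FPCtx2.absurdity
      { D := D, T := T, Y := Y, u0 := u,
        hD0 := hD0, hDsymm := hDsymm, hDtri := hDtri, hDsuff := hDsuff,
        hic := hic, hYcl := hYclosed, hTY := hTY, hTincr := hTincr,
        hd03 := hd03, hu0Y := hu.1, hu0T := hu.2,
        hnomax := hk' }
  obtain ⟨v, ⟨hvY, hvT, huv⟩, hmax⟩ := key
  refine ⟨v, hvY, ?_, huv, ?_⟩
  · have hTvM : T v ∈ Y ∧ T v ≤ T (T v) ∧ u ≤ T v :=
      ⟨hTY v hvY, hTincr v hvY (T v) (hTY v hvY) hvT, le_trans huv hvT⟩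
    exact (hmax (T v) hTvM hvT).symm
  · intro w hw hvw
    exact hmax w ⟨hw.1, hw.2, le_trans huv hvw⟩ hvw
end

section
/- Let (X,D,≤) be an ordered metrizable uniform space with ≤ interval-closed. Let Y be an order-closed subset of X, T : Y → Y an increasing map, and Y_oi = {x ∈ Y : x ≤ Tx} nonempty. Assume (d04): there exists k ∈ ℕ such that T^k(Y) is order-sequentially relatively compact (every increasing sequence in T^k(Y) is relatively compact). Then for every u ∈ Y_oi there exists v ∈ Y with v = Tv such that (a) u ≤ v, and (b) whenever w ∈ Y_oi satisfies v ≤ w, one has v = w. -/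
open Filter Topology

/-- A subset is order-sequentially relatively compact when each increasing
sequence in it is relatively compact. -/
def OrderSeqRelCompact {X : Type*} [PartialOrder X] (D : ℕ → X → X → ℝ) (Z : Set X) : Prop :=
  ∀ z : ℕ → X, (∀ n, z n ∈ Z) → (∀ i j : ℕ, i ≤ j → z i ≤ z j) → RelCompactSeq D z

section Aux
variable {X : Type*} [PartialOrder X] (D : ℕ → X → X → ℝ)

lemma dconv_comp {z : ℕ → X} {l : X} (h : DConv D z l) {s : ℕ → ℕ}
    (hs : Tendsto s atTop atTop) : DConv D (fun n => z (s n)) l :=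
  fun i => (h i).comp hs

lemma ub_of_subseq (hic : IntervalClosed D) {z : ℕ → X}
    (hz : ∀ i j : ℕ, i ≤ j → z i ≤ z j) {s : ℕ → ℕ} (hs : StrictMono s)
    {l : X} (hconv : DConv D (fun n => z (s n)) l) : ∀ m, z m ≤ l := by
  intro m
  have hmono : Tendsto (fun n : ℕ => m + n) atTop atTop :=
    tendsto_atTop_mono (fun n => Nat.le_add_left n m) tendsto_id
  exact (hic (z m)).1 (fun n => z (s (m + n))) l
    (fun n => hz m (s (m + n)) (le_trans (Nat.le_add_right m n) hs.le_apply))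
    (fun i j hij => hz _ _ (hs.monotone (by omega)))
    (dconv_comp D hconv hmono)

lemma conv_of_relCompact (hic : IntervalClosed D) {z : ℕ → X}
    (hz : ∀ i j : ℕ, i ≤ j → z i ≤ z j) (hrc : RelCompactSeq D z) :
    ∃ l : X, DConv D z l ∧ ∀ n, z n ≤ l := by
  obtain ⟨p, hp, l, hl⟩ := hrc id strictMono_id
  have hub : ∀ m, z m ≤ l := ub_of_subseq D hic hz hp hl
  refine ⟨l, ?_, hub⟩
  intro i
  by_contra hcon
  rw [Metric.tendsto_atTop] at hcon
  push_neg at hcon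
  obtain ⟨ε, hε, hfreq⟩ := hcon
  obtain ⟨q, hq, hqprop⟩ := Filter.extraction_of_frequently_atTop
    (Filter.frequently_atTop.2 hfreq)
  obtain ⟨p', hp', l', hl'⟩ := hrc q hq
  have hub' : ∀ m, z m ≤ l' := ub_of_subseq D hic hz (hq.comp hp') hl'
  have h1 : l ≤ l' := (hic l').2 (fun n => z (p n)) l (fun n => hub' _)
    (fun i j hij => hz _ _ (hp.monotone hij)) hl
  have h2 : l' ≤ l := (hic l).2 (fun n => z (q (p' n))) l' (fun n => hub _)
    (fun i j hij => hz _ _ ((hq.comp hp').monotone hij)) hl'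
  have hll : l' = l := le_antisymm h2 h1
  rw [hll] at hl'
  have := hl' i
  rw [Metric.tendsto_atTop] at this
  obtain ⟨Nn, hN⟩ := this ε hε
  exact absurd (hN Nn le_rfl) (not_lt.2 (hqprop (p' Nn)))

end Aux

/-- Theorem 7: the variant of the first main result under hypothesis (d04). -/
theorem comparison_fixed_point_d04 {X : Type*} [PartialOrder X] [Nonempty X]
    (D : ℕ → X → X → ℝ)
    (hD0 : ∀ i (x : X), D i x x = 0)
    (hDsymm : ∀ i (x y : X), D i x y = D i y x)
    (hDtri : ∀ i (x y z : X), D i x z ≤ D i x y + D i y z)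
    (hDsuff : ∀ x y : X, (∀ i, D i x y = 0) → x = y)
    (hic : IntervalClosed D)
    (Y : Set X) (hYclosed : OrderClosed D Y)
    (T : X → X) (hTY : ∀ x ∈ Y, T x ∈ Y)
    (hTincr : ∀ x ∈ Y, ∀ y ∈ Y, x ≤ y → T x ≤ T y)
    (hne : ({x ∈ Y | x ≤ T x} : Set X).Nonempty)
    (hd04 : ∃ k : ℕ, OrderSeqRelCompact D (T^[k] '' Y)) :
    ∀ u ∈ ({x ∈ Y | x ≤ T x} : Set X), ∃ v ∈ Y, T v = v ∧ u ≤ v ∧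
      ∀ w ∈ ({x ∈ Y | x ≤ T x} : Set X), v ≤ w → v = w := by
  obtain ⟨k, hk⟩ := hd04
  intro u hu
  obtain ⟨huY, huT⟩ := hu
  have Dnonneg : ∀ i (x y : X), 0 ≤ D i x y := by
    intro i x y
    have h := hDtri i x y x
    rw [hD0 i x, hDsymm i y x] at h
    linarith
  have hYiter : ∀ j (x : X), x ∈ Y → T^[j] x ∈ Y := by
    intro j
    induction j with
    | zero => intro x hx; simpa using hx
    | succ n ih =>
      intro x hx
      rw [Function.iterate_succ_apply']
      exact hTY _ (ih x hx)
  have hprog : ∀ j (x : X), x ∈ Y → x ≤ T x → x ≤ T^[j] x ∧ T^[j] x ≤ T (T^[j] x) := by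
    intro j
    induction j with
    | zero => intro x hx h; simpa using h
    | succ n ih =>
      intro x hx h
      obtain ⟨h1, h2⟩ := ih x hx h
      rw [Function.iterate_succ_apply']
      exact ⟨le_trans h1 h2, hTincr _ (hYiter n x hx) _ (hTY _ (hYiter n x hx)) h2⟩
  set N : Set X := {x | x ∈ Y ∧ x ≤ T x ∧ u ≤ x ∧ x ∈ T^[k] '' Y} with hNdef
  have memN : ∀ x : X, x ∈ Y → x ≤ T x → u ≤ x → T^[k] x ∈ N := by
    intro x hx hT hux
    obtain ⟨h1, h2⟩ := hprog k x hx hT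
    exact ⟨hYiter k x hx, h2, le_trans hux h1, ⟨x, hx, rfl⟩⟩
  set S : ℕ → X → Set ℝ := fun i x =>
    {r | ∃ y z : X, y ∈ N ∧ z ∈ N ∧ x ≤ y ∧ y ≤ z ∧ r = min 1 (D i y z)} with hSdef
  have Sne : ∀ i (x : X), x ∈ N → (S i x).Nonempty := by
    intro i x hx
    exact ⟨min 1 (D i x x), x, x, hx, hx, le_rfl, le_rfl, rfl⟩
  have Sbdd : ∀ i (x : X), BddAbove (S i x) := by
    intro i x
    refine ⟨1, ?_⟩
    rintro r ⟨y, z, _, _, _, _, rfl⟩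
    exact min_le_left _ _
  set φ : ℕ → X → ℝ := fun i x => sSup (S i x) with hφdef
  have φmem : ∀ i (x : X), ∀ r ∈ S i x, r ≤ φ i x :=
    fun i x r hr => le_csSup (Sbdd i x) hr
  have step : ∀ x ∈ N, ∀ i : ℕ, ∃ y z : X, y ∈ N ∧ z ∈ N ∧ x ≤ y ∧ y ≤ z ∧
      φ i x ≤ 2 * min 1 (D i y z) := by
    intro x hx i
    rcases le_or_gt (φ i x) 0 with h | h
    · refine ⟨x, x, hx, hx, le_rfl, le_rfl, ?_⟩
      rw [hD0 i x]
      have : min (1:ℝ) 0 = 0 := by norm_num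
      rw [this]
      linarith
    · obtain ⟨r, hrS, hr⟩ := exists_lt_of_lt_csSup (Sne i x hx)
        (by linarith : φ i x / 2 < φ i x)
      obtain ⟨y, z, hy, hz, hxy, hyz, rfl⟩ := hrS
      exact ⟨y, z, hy, hz, hxy, hyz, by linarith⟩
  choose Yf Zf hYf hZf hxYf hYZf hstep using step
  have hTkuN : T^[k] u ∈ N := memN u huY huT le_rfl
  let v : ℕ → {x : X // x ∈ N} := fun n =>
    Nat.rec (motive := fun _ => {x : X // x ∈ N}) ⟨T^[k] u, hTkuN⟩
      (fun m prev => ⟨Zf prev.1 prev.2 (Nat.unpair m).1,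
        hZf prev.1 prev.2 (Nat.unpair m).1⟩) n
  let y : ℕ → X := fun n => Yf (v n).1 (v n).2 (Nat.unpair n).1
  have hvy : ∀ n, (v n).1 ≤ y n := fun n => hxYf _ _ _
  have hyv : ∀ n, y n ≤ (v (n+1)).1 := fun n => hYZf (v n).1 (v n).2 (Nat.unpair n).1
  have hv_mono : ∀ i j : ℕ, i ≤ j → (v i).1 ≤ (v j).1 := by
    intro i j hij
    exact monotone_nat_of_le_succ (fun n => le_trans (hvy n) (hyv n)) hij
  have hy_mono : ∀ i j : ℕ, i ≤ j → y i ≤ y j := by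
    intro i j hij
    exact monotone_nat_of_le_succ (fun n => le_trans (hyv n) (hvy (n+1))) hij
  have hvim : ∀ n, (v n).1 ∈ T^[k] '' Y := fun n => (v n).2.2.2.2
  have hyim : ∀ n, y n ∈ T^[k] '' Y := fun n => (hYf (v n).1 (v n).2 (Nat.unpair n).1).2.2.2
  obtain ⟨l, hlconv, hlub⟩ := conv_of_relCompact D hic hv_mono (hk _ hvim hv_mono)
  obtain ⟨l', hl'conv, hl'ub⟩ := conv_of_relCompact D hic hy_mono (hk _ hyim hy_mono)
  have hle1 : l ≤ l' := (hic l').2 (fun n => (v n).1) l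
    (fun n => le_trans (hvy n) (hl'ub n)) hv_mono hlconv
  have hle2 : l' ≤ l := (hic l).2 y l'
    (fun n => le_trans (hyv n) (hlub (n+1))) hy_mono hl'conv
  have hll : l' = l := le_antisymm hle2 hle1
  rw [hll] at hl'conv
  have hlY : l ∈ Y := hYclosed (fun n => (v n).1) l (fun n => (v n).2.1) hv_mono hlconv
  have hlT : l ≤ T l := (hic (T l)).2 (fun n => (v n).1) l
    (fun n => le_trans (v n).2.2.1 (hTincr _ (v n).2.1 _ hlY (hlub n))) hv_mono hlconv
  have hul : u ≤ l := le_trans (hprog k u huY huT).1 (hlub 0)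
  set V : X := T^[k] l with hVdef
  have hVN : V ∈ N := memN l hlY hlT hul
  have hlV : l ≤ V := (hprog k l hlY hlT).1
  have hmax : ∀ z ∈ N, V ≤ z → V = z := by
    intro z hzN hVz
    by_contra hne'
    have hex : ∃ i, D i V z ≠ 0 := by
      by_contra hall
      push_neg at hall
      exact hne' (hDsuff V z hall)
    obtain ⟨i, hi⟩ := hex
    have hpos : 0 < D i V z := lt_of_le_of_ne (Dnonneg i V z) (Ne.symm hi)
    set c : ℝ := min 1 (D i V z) with hc
    have hcpos : 0 < c := lt_min one_pos hpos
    have hφc : ∀ n, c ≤ φ i (v n).1 := by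
      intro n
      exact φmem i (v n).1 c ⟨V, z, hVN, hzN, le_trans (hlub n) hlV, hVz, rfl⟩
    have hbound : ∀ m : ℕ,
        c ≤ 2 * (D i (y (Nat.pair i m)) l + D i ((v (Nat.pair i m + 1)).1) l) := by
      intro m
      set n := Nat.pair i m with hn
      have h1 : φ (Nat.unpair n).1 (v n).1 ≤
          2 * min 1 (D (Nat.unpair n).1 (y n) ((v (n+1)).1)) :=
        hstep (v n).1 (v n).2 (Nat.unpair n).1
      rw [hn, Nat.unpair_pair] at h1
      have h2 : c ≤ 2 * min 1 (D i (y n) ((v (n+1)).1)) := le_trans (hφc n) h1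
      have h3 : min 1 (D i (y n) ((v (n+1)).1)) ≤ D i (y n) ((v (n+1)).1) :=
        min_le_right _ _
      have h4 : D i (y n) ((v (n+1)).1) ≤ D i (y n) l + D i ((v (n+1)).1) l := by
        have h5 := hDtri i (y n) l ((v (n+1)).1)
        rw [hDsymm i l ((v (n+1)).1)] at h5
        linarith
      rw [hn] at h2 h3 h4
      linarith
    have hpair : Tendsto (fun m : ℕ => Nat.pair i m) atTop atTop :=
      tendsto_atTop_mono (fun m => Nat.right_le_pair i m) tendsto_id
    have t1 : Tendsto (fun m : ℕ => D i (y (Nat.pair i m)) l) atTop (𝓝 0) :=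
      (hl'conv i).comp hpair
    have t2 : Tendsto (fun m : ℕ => D i ((v (Nat.pair i m + 1)).1) l) atTop (𝓝 0) :=
      (hlconv i).comp (tendsto_atTop_mono
        (fun m => Nat.le_succ_of_le (Nat.right_le_pair i m)) tendsto_id)
    have t3 : Tendsto (fun m : ℕ =>
        2 * (D i (y (Nat.pair i m)) l + D i ((v (Nat.pair i m + 1)).1) l)) atTop (𝓝 0) := by
      have h := (t1.add t2).const_mul (2:ℝ)
      simpa using h
    have hc0 : c ≤ 0 := ge_of_tendsto' t3 hbound
    linarith
  refine ⟨V, hVN.1, ?_, hVN.2.2.1, ?_⟩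
  · have hTVim : T V ∈ T^[k] '' Y := by
      refine ⟨T l, hTY _ hlY, ?_⟩
      rw [← Function.iterate_succ_apply, Function.iterate_succ_apply']
    have hTVN : T V ∈ N :=
      ⟨hTY _ hVN.1, hTincr _ hVN.1 _ (hTY _ hVN.1) hVN.2.1,
        le_trans hVN.2.2.1 hVN.2.1, hTVim⟩
    exact (hmax (T V) hTVN hVN.2.1).symm
  · intro w hw hVw
    obtain ⟨hwY, hwT⟩ := hw
    have hwN : T^[k] w ∈ N := memN w hwY hwT (le_trans hVN.2.2.1 hVw)
    have h1 : V = T^[k] w := hmax _ hwN (le_trans hVw (hprog k w hwY hwT).1)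
    have h2 : w ≤ V := by rw [h1]; exact (hprog k w hwY hwT).1
    exact le_antisymm hVw h2
end

section
/- Let (X,D,≤) be an ordered metrizable uniform space with ≤ interval-closed. Let Y be an order-closed subset of X, T : Y → Y an increasing map, and Y_oi = {x ∈ Y : x ≤ Tx} nonempty. Assume: (d05) for every x ∈ Y_oi the (increasing) orbit sequence (T^n x) is relatively compact; (d06) T is sequentially continuous at the left: for each x in Y and each increasing sequence (x_n) in Y with x_n D-converging to x and x_n ≤ x for all n, the sequence (Tx_n) D-converges to Tx; (d07) T has the order uniqueness property: x ≤ y, x = Tx, y = Ty imply x = y. Then for every u ∈ Y_oi there exists v ∈ Y with v = Tv such that (a) u ≤ v, and (b) whenever w ∈ Y_oi satisfies v ≤ w, one has v = w. -/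
open Filter Topology

/-- Theorem 8 (second main result, 1986): the variant of the comparison
theorem under hypotheses (d05)+(d06)+(d07). -/
theorem comparison_fixed_point_d05 {X : Type*} [PartialOrder X] [Nonempty X]
    (D : ℕ → X → X → ℝ)
    (hD0 : ∀ i (x : X), D i x x = 0)
    (hDsymm : ∀ i (x y : X), D i x y = D i y x)
    (hDtri : ∀ i (x y z : X), D i x z ≤ D i x y + D i y z)
    (hDsuff : ∀ x y : X, (∀ i, D i x y = 0) → x = y)
    (hic : IntervalClosed D)
    (Y : Set X) (hYclosed : OrderClosed D Y)
    (T : X → X) (hTY : ∀ x ∈ Y, T x ∈ Y)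
    (hTincr : ∀ x ∈ Y, ∀ y ∈ Y, x ≤ y → T x ≤ T y)
    (hne : ({x ∈ Y | x ≤ T x} : Set X).Nonempty)
    (hd05 : ∀ x ∈ ({x ∈ Y | x ≤ T x} : Set X), RelCompactSeq D (fun n => T^[n] x))
    (hd06 : ∀ x ∈ Y, ∀ z : ℕ → X, (∀ n, z n ∈ Y) → (∀ i j : ℕ, i ≤ j → z i ≤ z j) →
      DConv D z x → (∀ n, z n ≤ x) → DConv D (fun n => T (z n)) (T x))
    (hd07 : ∀ x ∈ Y, ∀ y ∈ Y, x ≤ y → T x = x → T y = y → x = y) :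
    ∀ u ∈ ({x ∈ Y | x ≤ T x} : Set X), ∃ v ∈ Y, T v = v ∧ u ≤ v ∧
      ∀ w ∈ ({x ∈ Y | x ≤ T x} : Set X), v ≤ w → v = w := by

  -- Key step: every point of `Y_oi` sits below a fixed point.
  have key : ∀ u ∈ ({x ∈ Y | x ≤ T x} : Set X), ∃ v ∈ Y, T v = v ∧ u ≤ v := by
    intro u hu
    obtain ⟨huY, huT⟩ := hu
    have hmemY : ∀ n, T^[n] u ∈ Y := by
      intro n
      induction n with
      | zero => exact huY
      | succ n ih => rw [Function.iterate_succ_apply']; exact hTY _ ih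
    have hstep : ∀ n, T^[n] u ≤ T^[n + 1] u := by
      intro n
      induction n with
      | zero => simpa using huT
      | succ n ih =>
        rw [Function.iterate_succ_apply', Function.iterate_succ_apply' T (n+1)]
        exact hTincr _ (hmemY n) _ (hmemY (n + 1)) ih
    have hmono : Monotone (fun n => T^[n] u) := monotone_nat_of_le_succ hstep
    obtain ⟨p, hp, v, hv⟩ := hd05 u ⟨huY, huT⟩ id strictMono_id
    set z : ℕ → X := fun n => T^[p n] u with hz
    have hzY : ∀ n, z n ∈ Y := fun n => hmemY _
    have hzmono : ∀ i j : ℕ, i ≤ j → z i ≤ z j := fun i j hij => hmono (hp.monotone hij)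
    have hzconv : DConv D z v := hv
    have hvY : Y ∈ ({Y} : Set (Set X)) := rfl
    have hvinY : v ∈ Y := hYclosed z v hzY hzmono hzconv
    -- every `z n ≤ v` via interval closedness applied to the shifted sequence
    have hzle : ∀ n, z n ≤ v := by
      intro n
      have hshift : DConv D (fun k => z (k + n)) v := by
        intro i
        exact (hzconv i).comp (tendsto_add_atTop_nat n)
      exact (hic (z n)).1 (fun k => z (k + n)) v
        (fun k => le_trans (hzmono n (k + n) (Nat.le_add_left n k)) le_rfl)
        (fun i j hij => hzmono _ _ (by omega)) hshift
    have hTzconv : DConv D (fun n => T (z n)) (T v) :=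
      hd06 v hvinY z hzY hzmono hzconv hzle
    have hTzmono : ∀ i j : ℕ, i ≤ j → T (z i) ≤ T (z j) := fun i j hij =>
      hTincr _ (hzY i) _ (hzY j) (hzmono i j hij)
    have hTzle : ∀ n, T (z n) ≤ v := by
      intro n
      have h1 : T (z n) = T^[p n + 1] u := by
        rw [Function.iterate_succ_apply']
      have h2 : T^[p n + 1] u ≤ z (n + 1) := hmono (hp n.lt_succ_self)
      exact h1 ▸ le_trans h2 (hzle (n + 1))
    have hTvle : T v ≤ v :=
      (hic v).2 (fun n => T (z n)) (T v) hTzle hTzmono hTzconv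
    have hvleT : v ≤ T v := by
      refine (hic (T v)).2 z v (fun n => ?_) hzmono hzconv
      have h1 : z n ≤ T (z n) := by
        rw [show T (z n) = T^[p n + 1] u from (Function.iterate_succ_apply' T (p n) u).symm]
        exact hstep (p n)
      exact le_trans h1 (hTincr _ (hzY n) _ hvinY (hzle n))
    have hfix : T v = v := le_antisymm hTvle hvleT
    have huv : u ≤ v := le_trans (hmono (Nat.zero_le (p 0))) (hzle 0)
    exact ⟨v, hvinY, hfix, huv⟩
  intro u hu
  obtain ⟨v, hvY, hfix, huv⟩ := key u hu
  refine ⟨v, hvY, hfix, huv, ?_⟩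
  intro w hw hvw
  obtain ⟨z', hz'Y, hz'fix, hwz'⟩ := key w hw
  have : v = z' := hd07 v hvY z' hz'Y (le_trans hvw hwz') hfix hz'fix
  exact le_antisymm hvw (this ▸ hwz')
end

section
/- Let (X,D,≤) be an ordered metrizable uniform space with ≤ interval-closed and X order complete (every increasing D-Cauchy sequence D-converges). Let Y be an order-closed subset of X, T : Y → Y an increasing map, and Y_oi = {x ∈ Y : x ≤ Tx} nonempty. Assume (d09): for each i ∈ ℕ there is an increasing function f_i : [0,∞) → [0,∞) with f_i^n(t) → 0 as n → ∞ for every t > 0, such that d_i(Tx,Ty) ≤ f_i(d_i(x,y)) whenever x,y ∈ Y with x ≤ y (e.g. f_i(t) = sup{d_i(Tx,Ty) : x ≤ y, d_i(x,y) ≤ t}, assumed finite for all t). Then for every u ∈ Y_oi there exists v ∈ Y with v = Tv such that (a) u ≤ v, and (b) whenever w ∈ Y_oi satisfies v ≤ w, one has v = w. -/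
open Filter Topology

/-- `D`-Cauchy property of a sequence. -/
def DCauchy {X : Type*} (D : ℕ → X → X → ℝ) (x : ℕ → X) : Prop :=
  ∀ i : ℕ, ∀ ε : ℝ, 0 < ε → ∃ N : ℕ, ∀ m ≥ N, ∀ n ≥ N, D i (x m) (x n) < ε

private lemma matk_lt {f : ℝ → ℝ}
    (hmono : ∀ s t : ℝ, 0 ≤ s → s ≤ t → f s ≤ f t)
    (htend : ∀ t : ℝ, 0 < t → Tendsto (fun n => f^[n] t) atTop (𝓝 0)) :
    ∀ t : ℝ, 0 < t → f t < t := by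
  intro t ht
  by_contra h
  push_neg at h
  have key : ∀ n, t ≤ f^[n] t := by
    intro n
    induction n with
    | zero => simp
    | succ n ih =>
      rw [Function.iterate_succ_apply']
      exact le_trans h (hmono _ _ ht.le ih)
  obtain ⟨n, hn⟩ := ((htend t ht).eventually (gt_mem_nhds ht)).exists
  linarith [key n]

private lemma matk_small {f : ℝ → ℝ}
    (hmono : ∀ s t : ℝ, 0 ≤ s → s ≤ t → f s ≤ f t)
    (htend : ∀ t : ℝ, 0 < t → Tendsto (fun n => f^[n] t) atTop (𝓝 0)) :
    ∀ ε : ℝ, 0 < ε → ∃ δ : ℝ, 0 < δ ∧ f δ < ε := by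
  intro ε hε
  by_contra h
  push_neg at h
  have key : ∀ n, ε ≤ f^[n] ε := by
    intro n
    induction n with
    | zero => simp
    | succ n ih =>
      rw [Function.iterate_succ_apply']
      exact h _ (lt_of_lt_of_le hε ih)
  obtain ⟨n, hn⟩ := ((htend ε hε).eventually (gt_mem_nhds hε)).exists
  linarith [key n]

private lemma matk_zero {f : ℝ → ℝ} (hnn : ∀ t : ℝ, 0 ≤ t → 0 ≤ f t)
    (hmono : ∀ s t : ℝ, 0 ≤ s → s ≤ t → f s ≤ f t)
    (htend : ∀ t : ℝ, 0 < t → Tendsto (fun n => f^[n] t) atTop (𝓝 0)) :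
    f 0 = 0 := by
  by_contra h
  have hpos : 0 < f 0 := lt_of_le_of_ne (hnn 0 le_rfl) (Ne.symm h)
  have h1 : f 0 ≤ f (f 0) := hmono _ _ le_rfl hpos.le
  have h2 : f (f 0) < f 0 := matk_lt hmono htend _ hpos
  linarith

private lemma matk_tendsto {f : ℝ → ℝ} (hnn : ∀ t : ℝ, 0 ≤ t → 0 ≤ f t)
    (hmono : ∀ s t : ℝ, 0 ≤ s → s ≤ t → f s ≤ f t)
    (htend : ∀ t : ℝ, 0 < t → Tendsto (fun n => f^[n] t) atTop (𝓝 0)) :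
    ∀ t : ℝ, 0 ≤ t → Tendsto (fun n => f^[n] t) atTop (𝓝 0) := by
  intro t ht
  rcases ht.lt_or_eq with h | h
  · exact htend t h
  · have h0 : f 0 = 0 := matk_zero hnn hmono htend
    have : ∀ n, f^[n] t = 0 := by
      intro n
      induction n with
      | zero => simp [← h]
      | succ n ih => rw [Function.iterate_succ_apply', ih, h0]
    simpa [this] using tendsto_const_nhds

private lemma iter_bound {X : Type*} [PartialOrder X] (D : ℕ → X → X → ℝ)
    (Y : Set X) (T : X → X) (hTY : ∀ x ∈ Y, T x ∈ Y)
    (hTincr : ∀ x ∈ Y, ∀ y ∈ Y, x ≤ y → T x ≤ T y)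
    (hDnn : ∀ i (a b : X), 0 ≤ D i a b)
    {i : ℕ} {f : ℝ → ℝ}
    (hfmono : ∀ s t : ℝ, 0 ≤ s → s ≤ t → f s ≤ f t)
    (hfcon : ∀ x ∈ Y, ∀ y ∈ Y, x ≤ y → D i (T x) (T y) ≤ f (D i x y))
    {a b : X} (ha : a ∈ Y) (hb : b ∈ Y) (hab : a ≤ b) :
    ∀ n, T^[n] a ∈ Y ∧ T^[n] b ∈ Y ∧ T^[n] a ≤ T^[n] b ∧
      D i (T^[n] a) (T^[n] b) ≤ f^[n] (D i a b) := by
  intro n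
  induction n with
  | zero => exact ⟨ha, hb, hab, le_refl _⟩
  | succ n ih =>
    obtain ⟨h1, h2, h3, h4⟩ := ih
    simp only [Function.iterate_succ_apply']
    exact ⟨hTY _ h1, hTY _ h2, hTincr _ h1 _ h2 h3,
      le_trans (hfcon _ h1 _ h2 h3) (hfmono _ _ (hDnn i _ _) h4)⟩

/-- Theorem 9: the comparison fixed point theorem under order completeness (d08)
and the Matkowski-type contractive condition (d09). -/
theorem comparison_fixed_point_d09 {X : Type*} [PartialOrder X] [Nonempty X]
    (D : ℕ → X → X → ℝ)
    (hD0 : ∀ i (x : X), D i x x = 0)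
    (hDsymm : ∀ i (x y : X), D i x y = D i y x)
    (hDtri : ∀ i (x y z : X), D i x z ≤ D i x y + D i y z)
    (hDsuff : ∀ x y : X, (∀ i, D i x y = 0) → x = y)
    (hic : IntervalClosed D)
    (hordercomplete : ∀ z : ℕ → X, (∀ i j : ℕ, i ≤ j → z i ≤ z j) →
      DCauchy D z → ∃ l : X, DConv D z l)
    (Y : Set X) (hYclosed : OrderClosed D Y)
    (T : X → X) (hTY : ∀ x ∈ Y, T x ∈ Y)
    (hTincr : ∀ x ∈ Y, ∀ y ∈ Y, x ≤ y → T x ≤ T y)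
    (hne : ({x ∈ Y | x ≤ T x} : Set X).Nonempty)
    (hd09 : ∀ i : ℕ, ∃ f : ℝ → ℝ,
      (∀ t : ℝ, 0 ≤ t → 0 ≤ f t) ∧
      (∀ s t : ℝ, 0 ≤ s → s ≤ t → f s ≤ f t) ∧
      (∀ t : ℝ, 0 < t → Tendsto (fun n => f^[n] t) atTop (𝓝 0)) ∧
      (∀ x ∈ Y, ∀ y ∈ Y, x ≤ y → D i (T x) (T y) ≤ f (D i x y))) :
    ∀ u ∈ ({x ∈ Y | x ≤ T x} : Set X), ∃ v ∈ Y, T v = v ∧ u ≤ v ∧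
      ∀ w ∈ ({x ∈ Y | x ≤ T x} : Set X), v ≤ w → v = w := by
  have hDnn : ∀ i (a b : X), 0 ≤ D i a b := by
    intro i a b
    have h1 := hDtri i a b a
    rw [hD0, hDsymm i b a] at h1
    linarith
  intro u hu
  obtain ⟨huY, huT⟩ := hu
  set x : ℕ → X := fun n => T^[n] u with hxdef
  have hxY : ∀ n, x n ∈ Y := by
    intro n
    induction n with
    | zero => simpa [hxdef] using huY
    | succ n ih =>
      have : x (n + 1) = T (x n) := Function.iterate_succ_apply' T n u
      rw [this]; exact hTY _ ih
  have hxsucc : ∀ n, x (n + 1) = T (x n) := fun n => Function.iterate_succ_apply' T n u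
  have hxstep : ∀ n, x n ≤ x (n + 1) := by
    intro n
    induction n with
    | zero => simpa [hxdef] using huT
    | succ n ih =>
      rw [hxsucc n, hxsucc (n + 1)]
      exact hTincr _ (hxY n) _ (hxY (n + 1)) ih
  have hxmono : Monotone x := monotone_nat_of_le_succ hxstep
  -- Cauchy
  have hcauchy : DCauchy D x := by
    intro i ε hε
    obtain ⟨f, hfnn, hfmono, hftend, hfcon⟩ := hd09 i
    have hflt := matk_lt hfmono hftend
    have hdn : ∀ n, D i (x n) (x (n + 1)) ≤ f^[n] (D i (x 0) (x 1)) := by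
      intro n
      have := (iter_bound D Y T hTY hTincr hDnn hfmono hfcon huY (hTY _ huY) huT n).2.2.2
      rw [← Function.iterate_succ_apply T n u] at this
      simp only [hxdef]
      simpa using this
    have hdtend : Tendsto (fun n => D i (x n) (x (n + 1))) atTop (𝓝 0) := by
      refine tendsto_of_tendsto_of_tendsto_of_le_of_le tendsto_const_nhds
        (matk_tendsto hfnn hfmono hftend _ (hDnn i _ _)) (fun n => hDnn i _ _) hdn
    set ε2 := ε / 2 with hε2def
    have hε2 : 0 < ε2 := by positivity
    have hη : 0 < ε2 - f ε2 := by have := hflt ε2 hε2; linarith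
    obtain ⟨N, hN⟩ := (hdtend.eventually (gt_mem_nhds hη)).exists
    have claim : ∀ m, N ≤ m → D i (x N) (x m) < ε2 := by
      intro m hm
      induction m, hm using Nat.le_induction with
      | base => rw [hD0]; exact hε2
      | succ m hm ih =>
        have h1 : D i (x N) (x (m + 1)) ≤ D i (x N) (x (N + 1)) + D i (x (N + 1)) (x (m + 1)) :=
          hDtri i _ _ _
        have h2 : D i (x (N + 1)) (x (m + 1)) ≤ f (D i (x N) (x m)) := by
          rw [hxsucc N, hxsucc m]
          exact hfcon _ (hxY N) _ (hxY m) (hxmono hm)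
        have h3 : f (D i (x N) (x m)) ≤ f ε2 := hfmono _ _ (hDnn i _ _) ih.le
        linarith
    refine ⟨N, fun m hm n hn => ?_⟩
    have h1 : D i (x m) (x n) ≤ D i (x m) (x N) + D i (x N) (x n) := hDtri i _ _ _
    rw [hDsymm i (x m) (x N)] at h1
    have := claim m hm
    have := claim n hn
    rw [hε2def] at *
    linarith
  obtain ⟨v, hv⟩ := hordercomplete x (fun i j h => hxmono h) hcauchy
  have hvY : v ∈ Y := hYclosed x v hxY (fun i j h => hxmono h) hv
  have hxle : ∀ n, x n ≤ v := by
    intro n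
    refine (hic (x n)).1 (fun m => x (m + n)) v (fun m => hxmono (Nat.le_add_left n m))
      (fun i j hij => hxmono (by omega)) ?_
    intro i
    exact (hv i).comp (tendsto_add_atTop_nat n)
  have hule : u ≤ v := by
    have := hxle 0
    simpa [hxdef] using this
  have hfix : T v = v := by
    have hall : ∀ i, D i v (T v) = 0 := by
      intro i
      obtain ⟨f, hfnn, hfmono, hftend, hfcon⟩ := hd09 i
      by_contra hne0
      have hpos : 0 < D i v (T v) := lt_of_le_of_ne (hDnn i v (T v)) (Ne.symm hne0)
      obtain ⟨δ, hδ, hfδ⟩ := matk_small hfmono hftend (D i v (T v) / 2) (by positivity)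
      have h1 : ∀ᶠ n in atTop, D i (x n) v < δ := (hv i).eventually (gt_mem_nhds hδ)
      have h2 : ∀ᶠ n in atTop, D i (x (n + 1)) v < D i v (T v) / 2 := by
        have := (hv i).comp (tendsto_add_atTop_nat 1)
        exact this.eventually (gt_mem_nhds (by positivity))
      obtain ⟨n, hn1, hn2⟩ := (h1.and h2).exists
      have hcon' : D i (x (n + 1)) (T v) ≤ f (D i (x n) v) := by
        rw [hxsucc n]
        exact hfcon _ (hxY n) _ hvY (hxle n)
      have h3 : f (D i (x n) v) ≤ f δ := hfmono _ _ (hDnn i _ _) hn1.le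
      have h4 : D i v (T v) ≤ D i v (x (n + 1)) + D i (x (n + 1)) (T v) := hDtri i _ _ _
      rw [hDsymm i v (x (n + 1))] at h4
      linarith
    exact (hDsuff v (T v) hall).symm
  refine ⟨v, hvY, hfix, hule, ?_⟩
  intro w hw hvw
  obtain ⟨hwY, hwT⟩ := hw
  have hvfix : ∀ n, T^[n] v = v := fun n => Function.iterate_fixed hfix n
  have hconv : DConv D (fun n => T^[n] w) v := by
    intro i
    obtain ⟨f, hfnn, hfmono, hftend, hfcon⟩ := hd09 i
    have hb : ∀ n, D i (T^[n] w) v ≤ f^[n] (D i v w) := by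
      intro n
      have := (iter_bound D Y T hTY hTincr hDnn hfmono hfcon hvY hwY hvw n).2.2.2
      rw [hvfix n] at this
      rwa [hDsymm i (T^[n] w) v]
    exact tendsto_of_tendsto_of_tendsto_of_le_of_le tendsto_const_nhds
      (matk_tendsto hfnn hfmono hftend _ (hDnn i _ _)) (fun n => hDnn i _ _) hb
  have hyY : ∀ n, T^[n] w ∈ Y := by
    intro n
    induction n with
    | zero => simpa using hwY
    | succ n ih => rw [Function.iterate_succ_apply']; exact hTY _ ih
  have hystep : ∀ n, T^[n] w ≤ T^[n + 1] w := by
    intro n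
    induction n with
    | zero => simpa using hwT
    | succ n ih =>
      have := hTincr _ (hyY n) _ (hyY (n + 1)) ih
      simpa only [← Function.iterate_succ_apply'] using this
  have hymono : Monotone (fun n => T^[n] w) := monotone_nat_of_le_succ hystep
  have hwv : w ≤ v :=
    (hic w).1 (fun n => T^[n] w) v
      (fun n => by simpa using hymono (Nat.zero_le n))
      (fun i j hij => hymono hij) hconv
  exact le_antisymm hvw hwv
end

section
/- Let X be a nonempty set with a partial order ≤ and a countable family D = (d_i ; i ∈ ℕ) of pseudometrics on X. Let Y ⊆ X, T : Y → Y increasing (x ≤ y implies Tx ≤ Ty), and u ∈ Y with u ≤ Tu. Suppose for each i ∈ ℕ there is an increasing function f_i : [0,∞) → [0,∞) with f_i^n(t) → 0 as n → ∞ for every t > 0, such that d_i(Tx,Ty) ≤ f_i(d_i(x,y)) whenever x,y ∈ Y with x ≤ y. Then the orbit (T^n u ; n ≥ 0) is D-Cauchy: for each i ∈ ℕ and ε > 0 there exists m such that d_i(T^m u, T^{m+n} u) ≤ ε for all n ≥ 0. -/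
open Filter Topology

/-- Under a Matkowski-type contractive condition on each pseudometric `d_i`,
the orbit of any point `u` with `u ≤ Tu` is `D`-Cauchy. -/
theorem orbit_DCauchy_of_matkowski {X : Type*} [PartialOrder X] [Nonempty X]
    (D : ℕ → X → X → ℝ)
    (hD0 : ∀ i (x : X), D i x x = 0)
    (hDsymm : ∀ i (x y : X), D i x y = D i y x)
    (hDtri : ∀ i (x y z : X), D i x z ≤ D i x y + D i y z)
    (Y : Set X)
    (T : X → X) (hTY : ∀ x ∈ Y, T x ∈ Y)
    (hTincr : ∀ x ∈ Y, ∀ y ∈ Y, x ≤ y → T x ≤ T y)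
    (u : X) (hu : u ∈ Y) (huT : u ≤ T u)
    (hd09 : ∀ i : ℕ, ∃ f : ℝ → ℝ,
      (∀ t : ℝ, 0 ≤ t → 0 ≤ f t) ∧
      (∀ s t : ℝ, 0 ≤ s → s ≤ t → f s ≤ f t) ∧
      (∀ t : ℝ, 0 < t → Tendsto (fun n => f^[n] t) atTop (𝓝 0)) ∧
      (∀ x ∈ Y, ∀ y ∈ Y, x ≤ y → D i (T x) (T y) ≤ f (D i x y))) :
    ∀ i : ℕ, ∀ ε : ℝ, 0 < ε → ∃ m : ℕ, ∀ n : ℕ, D i (T^[m] u) (T^[m + n] u) ≤ ε := by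
  intro i ε hε
  obtain ⟨f, hf0, hfmono, hftend, hfcontr⟩ := hd09 i
  have hDnn : ∀ x y : X, 0 ≤ D i x y := by
    intro x y
    have h := hDtri i x y x
    rw [hD0, hDsymm i y x] at h
    linarith
  have hmem : ∀ n, T^[n] u ∈ Y := by
    intro n; induction n with
    | zero => simpa using hu
    | succ n ih => rw [Function.iterate_succ_apply']; exact hTY _ ih
  have hstep : ∀ n, T^[n] u ≤ T^[n+1] u := by
    intro n; induction n with
    | zero => simpa using huT
    | succ n ih =>
      rw [Function.iterate_succ_apply' T n, Function.iterate_succ_apply' T (n+1)]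
      exact hTincr _ (hmem n) _ (hmem (n+1)) ih
  have hle : ∀ m n : ℕ, T^[m] u ≤ T^[m+n] u := by
    intro m n; induction n with
    | zero => simp
    | succ n ih => exact ih.trans (by rw [← Nat.add_assoc]; exact hstep (m+n))
  have hflt : ∀ t : ℝ, 0 < t → f t < t := by
    intro t ht
    by_contra h
    push_neg at h
    have hiter : ∀ n, t ≤ f^[n] t := by
      intro n; induction n with
      | zero => simp
      | succ n ih =>
        rw [Function.iterate_succ_apply']
        exact h.trans (hfmono t _ ht.le ih)
    have := ge_of_tendsto (hftend t ht) (Eventually.of_forall hiter)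
    linarith
  set a : ℕ → ℝ := fun n => D i (T^[n] u) (T^[n+1] u) with ha
  have hacontr : ∀ n, a (n+1) ≤ f (a n) := by
    intro n
    have h := hfcontr _ (hmem n) _ (hmem (n+1)) (hstep n)
    simpa [ha, Function.iterate_succ_apply'] using h
  have hgrow : ∀ n, a n ≤ f^[n] (a 0 + 1) := by
    intro n; induction n with
    | zero => simp
    | succ n ih =>
      rw [Function.iterate_succ_apply']
      exact (hacontr n).trans (hfmono _ _ (hDnn _ _) ih)
  have ha0pos : (0:ℝ) < a 0 + 1 := by
    have := hDnn (T^[0] u) (T^[1] u); simp only [ha]; linarith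
  have ha0 : Tendsto a atTop (𝓝 0) :=
    squeeze_zero (fun n => hDnn _ _) hgrow (hftend _ ha0pos)
  have hεf : 0 < ε - f ε := by linarith [hflt ε hε]
  obtain ⟨m, hm⟩ := (Metric.tendsto_atTop.mp ha0) (ε - f ε) hεf
  have ham : a m ≤ ε - f ε := by
    have := hm m le_rfl
    rw [Real.dist_eq, sub_zero, abs_of_nonneg (hDnn _ _)] at this
    linarith
  refine ⟨m, fun n => ?_⟩
  induction n with
  | zero => simp [hD0, hε.le]
  | succ n ih =>
    have htri := hDtri i (T^[m] u) (T^[m+1] u) (T^[m+n+1] u)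
    have hc : D i (T^[m+1] u) (T^[m+n+1] u) ≤ f (D i (T^[m] u) (T^[m+n] u)) := by
      rw [Function.iterate_succ_apply' T m, Function.iterate_succ_apply' T (m+n)]
      exact hfcontr _ (hmem m) _ (hmem (m+n)) (hle m n)
    have hfε : f (D i (T^[m] u) (T^[m+n] u)) ≤ f ε := hfmono _ _ (hDnn _ _) ih
    have : D i (T^[m] u) (T^[m+n+1] u) ≤ (ε - f ε) + f ε := by
      calc D i (T^[m] u) (T^[m+n+1] u)
          ≤ D i (T^[m] u) (T^[m+1] u) + D i (T^[m+1] u) (T^[m+n+1] u) := htri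
        _ ≤ (ε - f ε) + f ε := add_le_add ham (hc.trans hfε)
    simpa [Nat.add_assoc] using this
end

section
/- (Matkowski) Let f : [0,∞) → [0,∞) be increasing (t ≤ s implies f(t) ≤ f(s)) and satisfy f^n(t) → 0 as n → ∞ for every t > 0, where f^n is the n-th iterate of f. Then f(t) < t for every t > 0 (and consequently f(0) = 0). -/
open Filter Topology

/-- Matkowski's lemma: an increasing selfmap `f` of `[0,∞)` whose iterates tend
to `0` at every `t > 0` satisfies `f(t) < t` for all `t > 0`, and `f(0) = 0`. -/
theorem matkowski_lemma (f : ℝ → ℝ)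
    (hmaps : ∀ t : ℝ, 0 ≤ t → 0 ≤ f t)
    (hmono : ∀ s t : ℝ, 0 ≤ s → s ≤ t → f s ≤ f t)
    (hiter : ∀ t : ℝ, 0 < t → Tendsto (fun n => f^[n] t) atTop (𝓝 0)) :
    (∀ t : ℝ, 0 < t → f t < t) ∧ f 0 = 0 := by
  have key : ∀ t : ℝ, 0 < t → f t < t := by
    intro t ht
    by_contra h
    push_neg at h
    have hn : ∀ n, t ≤ f^[n] t := by
      intro n
      induction n with
      | zero => simp
      | succ n ih =>
        rw [Function.iterate_succ_apply']
        exact le_trans h (hmono t _ ht.le ih)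
    have := ge_of_tendsto (hiter t ht) (Eventually.of_forall hn)
    linarith
  refine ⟨key, ?_⟩
  have h0 : 0 ≤ f 0 := hmaps 0 le_rfl
  rcases h0.lt_or_eq with h | h
  · have h1 := key (f 0) h
    have h2 := hmono 0 (f 0) le_rfl h0
    linarith
  · exact h.symm
end
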